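/- arXiv:1907.02851 — 2 statements merged into one kernel-verified Lean document; each statement's English description precedes it below -/
import Mathlib

section
/- (Lemma 2.1) Let G = G₁ ∪ G₂ ∪ G₃ be a connected graph, where G₁, G₂, G₃ are connected subgraphs, each with at least 2 vertices, such that V(Gᵢ) ∩ V(Gⱼ) = {v₀} for all 1 ≤ i ≠ j ≤ 3 and every edge of G lies in some Gᵢ. Let u ∈ V(G₂)\{v₀}, and let G̃ be the graph obtained from G by moving G₃ from v₀ to u. Let x be a unit eigenvector of L_D(G) corresponding to ρ_L(G), writing x_v = x(v). Then: (i) if Σ_{v_i ∈ V(G₃)\{v₀}} Σ_{v_j ∈ V(G₁)} (x_{v_i} − x_{v_j})² ≥ Σ_{v_i ∈ V(G₃)\{v₀}} Σ_{v_j ∈ V(G₂)} (x_{v_i} − x_{v_j})², then ρ_L(G̃) ≥ ρ_L(G); (ii) if the same inequality holds strictly, then ρ_L(G̃) > ρ_L(G). -/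
open Matrix Finset

/-- The transmission of a vertex: sum of distances to all vertices. -/
noncomputable def transmission {V : Type*} [Fintype V] (G : SimpleGraph V) (u : V) : ℝ :=
  ∑ w : V, (G.dist u w : ℝ)

/-- The distance Laplacian matrix `L_D(G) = Tr(G) - D(G)`. -/
noncomputable def distLaplacian {V : Type*} [Fintype V] (G : SimpleGraph V) :
    Matrix V V ℝ := fun u v =>
  letI := Classical.decEq V
  (if u = v then transmission G u else 0) - (G.dist u v : ℝ)

/-- The largest eigenvalue of the distance Laplacian (distance Laplacian spectral radius). -/
noncomputable def rhoL {V : Type*} [Fintype V] (G : SimpleGraph V) : ℝ :=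
  sSup {μ : ℝ | ∃ x : V → ℝ, x ≠ 0 ∧ (distLaplacian G).mulVec x = μ • x}

section Aux

set_option linter.unusedSectionVars false

variable {V : Type} [Fintype V] [DecidableEq V]

lemma rayleigh_le_sSup {V : Type} [Fintype V] [DecidableEq V] [Nonempty V]
    (M : Matrix V V ℝ) (hM : M.IsHermitian) (x : V → ℝ) (hx : ∑ v, x v ^ 2 = 1) :
    x ⬝ᵥ M.mulVec x ≤ sSup {μ : ℝ | ∃ y : V → ℝ, y ≠ 0 ∧ M.mulVec y = μ • y} := by
  classical
  set E := EuclideanSpace ℝ V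
  set T : E →ₗ[ℝ] E := Matrix.toEuclideanLin M with hT
  have hsym : T.IsSymmetric := Matrix.isHermitian_iff_isSymmetric.mp hM
  set μ : ℝ := ⨆ z : { z : E // z ≠ 0 }, RCLike.re (inner ℝ (T z) (z : E) : ℝ) / ‖(z : E)‖ ^ 2 with hμ
  have heig : Module.End.HasEigenvalue T μ := hsym.hasEigenvalue_iSup_of_finiteDimensional
  obtain ⟨y, hy⟩ := heig.exists_hasEigenvector
  have hμmem : μ ∈ {μ : ℝ | ∃ y : V → ℝ, y ≠ 0 ∧ M.mulVec y = μ • y} := by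
    refine ⟨(WithLp.equiv 2 (V → ℝ)) y, ?_, ?_⟩
    · simpa using hy.right
    · have := hy.apply_eq_smul
      exact congrArg (WithLp.equiv 2 (V → ℝ)) this
  have hinner : ∀ z : E, (inner ℝ (T z) z : ℝ) =
      ((WithLp.equiv 2 (V → ℝ)) z) ⬝ᵥ M.mulVec ((WithLp.equiv 2 (V → ℝ)) z) := by
    intro z
    rw [EuclideanSpace.inner_eq_star_dotProduct]
    simp [dotProduct_comm]
    rfl
  set Tc : E →L[ℝ] E := LinearMap.toContinuousLinearMap T with hTc
  have hray_le : ∀ z : E, z ≠ 0 → (inner ℝ (T z) z : ℝ) / ‖z‖ ^ 2 ≤ ‖Tc‖ := by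
    intro z hz
    have h1 : (inner ℝ (T z) z : ℝ) ≤ ‖T z‖ * ‖z‖ := real_inner_le_norm _ _
    have h2 : ‖T z‖ ≤ ‖Tc‖ * ‖z‖ := Tc.le_opNorm z
    have hz' : (0:ℝ) < ‖z‖ ^ 2 := pow_pos (norm_pos_iff.mpr hz) 2
    rw [div_le_iff₀ hz']
    calc (inner ℝ (T z) z : ℝ) ≤ ‖T z‖ * ‖z‖ := h1
      _ ≤ (‖Tc‖ * ‖z‖) * ‖z‖ := by
          have : (0:ℝ) ≤ ‖z‖ := norm_nonneg _
          nlinarith [norm_nonneg (T z)]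
      _ = ‖Tc‖ * ‖z‖ ^ 2 := by ring
  have hbddS : BddAbove {μ : ℝ | ∃ y : V → ℝ, y ≠ 0 ∧ M.mulVec y = μ • y} := by
    refine ⟨‖Tc‖, ?_⟩
    rintro ν ⟨w, hw0, hweq⟩
    set w' : E := (WithLp.equiv 2 (V → ℝ)).symm w with hw'
    have hw'0 : w' ≠ 0 := fun h => hw0 (congrArg WithLp.ofLp h)
    have hTw : T w' = ν • w' := by
      rw [hT, hw']
      exact congrArg (WithLp.toLp 2) hweq
    have hin : (inner ℝ (T w') w' : ℝ) = ν * ‖w'‖ ^ 2 := by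
      rw [hTw, real_inner_smul_left, real_inner_self_eq_norm_sq]
    have := hray_le w' hw'0
    rw [hin] at this
    have hwpos : (0:ℝ) < ‖w'‖ ^ 2 := pow_pos (norm_pos_iff.mpr hw'0) 2
    calc ν = ν * ‖w'‖ ^ 2 / ‖w'‖ ^ 2 := (mul_div_cancel_right₀ ν hwpos.ne').symm
      _ ≤ ‖Tc‖ := this
  set x' : E := (WithLp.equiv 2 (V → ℝ)).symm x with hx'
  have hx'0 : x' ≠ 0 := by
    intro h
    have : x = 0 := congrArg WithLp.ofLp h
    rw [this] at hx; simp at hx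
  have hnx : ‖x'‖ ^ 2 = 1 := by
    rw [← real_inner_self_eq_norm_sq, hx', WithLp.equiv_symm_apply, EuclideanSpace.inner_toLp_toLp]
    simpa [dotProduct, ← sq] using hx
  have hxin : (inner ℝ (T x') x' : ℝ) = x ⬝ᵥ M.mulVec x := by
    rw [hinner x']
    simp [hx']
  have hbddR : BddAbove (Set.range fun z : { z : E // z ≠ 0 } =>
      RCLike.re (inner ℝ (T z) (z : E) : ℝ) / ‖(z : E)‖ ^ 2) := by
    refine ⟨‖Tc‖, ?_⟩
    rintro r ⟨z, rfl⟩
    simpa using hray_le z z.2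
  have h1 : x ⬝ᵥ M.mulVec x ≤ μ := by
    have := le_ciSup hbddR (⟨x', hx'0⟩ : { z : E // z ≠ 0 })
    rw [hμ]
    calc x ⬝ᵥ M.mulVec x = RCLike.re (inner ℝ (T x') x' : ℝ) / ‖x'‖ ^ 2 := by
          rw [hxin]; simp [hnx]
      _ ≤ _ := this
  exact h1.trans (le_csSup hbddS hμmem)

lemma cut_crossing {H : SimpleGraph V} {T : Finset V} {w : V}
    (hT : ∀ a b : V, a ∈ T → a ≠ w → H.Adj a b → b ∈ T) :
    ∀ {a b : V} (p : H.Walk a b), a ∈ T → b ∉ T → w ∈ p.support := by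
  intro a b p
  induction p with
  | nil => intro ha hb; exact absurd ha hb
  | @cons a c b h p ih =>
    intro ha hb
    by_cases haw : a = w
    · simp [haw]
    · have hc : c ∈ T := hT a c ha haw h
      simp only [SimpleGraph.Walk.support_cons, List.mem_cons]
      exact Or.inr (ih hc hb)

lemma cut_path_support {H : SimpleGraph V} {T : Finset V} {w : V}
    (hT : ∀ a b : V, a ∈ T → a ≠ w → H.Adj a b → b ∈ T) (hw : w ∈ T) :
    ∀ {a b : V} (p : H.Walk a b), p.IsPath → a ∈ T → b ∈ T → ∀ c ∈ p.support, c ∈ T := by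
  intro a b p hp ha hb c hc
  by_contra hcT
  have h1 : w ∈ (p.takeUntil c hc).support := cut_crossing hT _ ha hcT
  have h2 : w ∈ (p.dropUntil c hc).support := by
    have := cut_crossing hT (p.dropUntil c hc).reverse hb hcT
    rwa [SimpleGraph.Walk.support_reverse, List.mem_reverse] at this
  have hnd := hp.support_nodup
  rw [← SimpleGraph.Walk.take_spec p hc, SimpleGraph.Walk.support_append] at hnd
  have hdisj := List.disjoint_of_nodup_append hnd
  rcases (SimpleGraph.Walk.support_eq_cons (p.dropUntil c hc)) ▸ h2 with h2'
  rw [List.mem_cons] at h2'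
  rcases h2' with rfl | h2''
  · exact hcT hw
  · exact hdisj h1 h2''

lemma walk_transfer {H H' : SimpleGraph V} {T : Finset V} (f : V → V)
    (hf : ∀ a b : V, a ∈ T → b ∈ T → H.Adj a b → H'.Adj (f a) (f b)) :
    ∀ {a b : V} (p : H.Walk a b), (∀ c ∈ p.support, c ∈ T) →
      ∃ q : H'.Walk (f a) (f b), q.length = p.length := by
  intro a b p
  induction p with
  | nil => intro _; exact ⟨SimpleGraph.Walk.nil, rfl⟩
  | @cons a c b h p ih =>
    intro hsub
    have ha : a ∈ T := hsub a (SimpleGraph.Walk.start_mem_support _)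
    have hc : c ∈ T := by
      apply hsub
      simp [SimpleGraph.Walk.support_cons]
    obtain ⟨q, hq⟩ := ih (fun d hd => hsub d (by simp [SimpleGraph.Walk.support_cons, hd]))
    exact ⟨SimpleGraph.Walk.cons (hf a c ha hc h) q, by simp [hq]⟩

lemma dist_transfer {H H' : SimpleGraph V} {T : Finset V} {w : V} (f : V → V)
    (hT : ∀ a b : V, a ∈ T → a ≠ w → H.Adj a b → b ∈ T) (hw : w ∈ T)
    (hf : ∀ a b : V, a ∈ T → b ∈ T → H.Adj a b → H'.Adj (f a) (f b))
    {a b : V} (hr : H.Reachable a b) (ha : a ∈ T) (hb : b ∈ T) :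
    H'.dist (f a) (f b) ≤ H.dist a b := by
  obtain ⟨p, hp, hlen⟩ := hr.exists_path_of_dist
  have hsub := cut_path_support hT hw p hp ha hb
  obtain ⟨q, hq⟩ := walk_transfer f hf p hsub
  calc H'.dist (f a) (f b) ≤ q.length := SimpleGraph.dist_le q
    _ = p.length := hq
    _ = H.dist a b := hlen

lemma reach_transfer {H H' : SimpleGraph V} {T : Finset V} {w : V} (f : V → V)
    (hT : ∀ a b : V, a ∈ T → a ≠ w → H.Adj a b → b ∈ T) (hw : w ∈ T)
    (hf : ∀ a b : V, a ∈ T → b ∈ T → H.Adj a b → H'.Adj (f a) (f b))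
    {a b : V} (hr : H.Reachable a b) (ha : a ∈ T) (hb : b ∈ T) :
    H'.Reachable (f a) (f b) := by
  obtain ⟨p, hp, hlen⟩ := hr.exists_path_of_dist
  have hsub := cut_path_support hT hw p hp ha hb
  obtain ⟨q, _⟩ := walk_transfer f hf p hsub
  exact ⟨q⟩

lemma dist_split {H : SimpleGraph V} (hconn : H.Connected) {T : Finset V} {w : V}
    (hT : ∀ a b : V, a ∈ T → a ≠ w → H.Adj a b → b ∈ T)
    {a b : V} (ha : a ∈ T) (hb : b ∉ T) :
    H.dist a b = H.dist a w + H.dist w b := by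
  refine le_antisymm (hconn.dist_triangle) ?_
  obtain ⟨p, hp, hlen⟩ := (hconn a b).exists_path_of_dist
  have hwp : w ∈ p.support := cut_crossing hT p ha hb
  calc H.dist a w + H.dist w b ≤ (p.takeUntil w hwp).length + (p.dropUntil w hwp).length :=
        add_le_add (SimpleGraph.dist_le _) (SimpleGraph.dist_le _)
    _ = p.length := by rw [← SimpleGraph.Walk.length_append, SimpleGraph.Walk.take_spec]
    _ = H.dist a b := hlen

lemma distLaplacian_apply (H : SimpleGraph V) (a b : V) :
    distLaplacian H a b = (if a = b then transmission H a else 0) - (H.dist a b : ℝ) := by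
  unfold distLaplacian
  congr

lemma distLaplacian_isHermitian (H : SimpleGraph V) : (distLaplacian H).IsHermitian := by
  ext a b
  simp only [conjTranspose_apply, distLaplacian_apply, star_trivial]
  by_cases h : a = b
  · subst h; simp
  · rw [if_neg h, if_neg (Ne.symm h), SimpleGraph.dist_comm]

lemma quad_form (H : SimpleGraph V) (x : V → ℝ) :
    ∑ a : V, ∑ b : V, (H.dist a b : ℝ) * (x a - x b) ^ 2 =
      2 * (x ⬝ᵥ (distLaplacian H).mulVec x) := by
  have h2 : ∑ a : V, ∑ b : V, (H.dist a b : ℝ) * x b ^ 2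
      = ∑ a : V, ∑ b : V, (H.dist a b : ℝ) * x a ^ 2 := by
    rw [Finset.sum_comm]
    refine Finset.sum_congr rfl fun a _ => Finset.sum_congr rfl fun b _ => ?_
    rw [SimpleGraph.dist_comm]
  have hR : x ⬝ᵥ (distLaplacian H).mulVec x =
      ∑ a : V, ∑ b : V, (H.dist a b : ℝ) * x a ^ 2
        - ∑ a : V, ∑ b : V, (H.dist a b : ℝ) * (x a * x b) := by
    simp only [dotProduct, mulVec, distLaplacian_apply, transmission]
    rw [← Finset.sum_sub_distrib]
    refine Finset.sum_congr rfl fun a _ => ?_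
    have e1 : ∑ b : V, ((if a = b then (∑ w : V, (H.dist a w : ℝ)) else 0) - (H.dist a b : ℝ)) * x b
        = (∑ w : V, (H.dist a w : ℝ)) * x a - ∑ b : V, (H.dist a b : ℝ) * x b := by
      simp [sub_mul, Finset.sum_sub_distrib, ite_mul]
    rw [e1, mul_sub]
    have e2 : x a * ((∑ w : V, (H.dist a w : ℝ)) * x a) = ∑ b : V, (H.dist a b : ℝ) * x a ^ 2 := by
      rw [Finset.sum_mul, Finset.mul_sum]
      exact Finset.sum_congr rfl fun b _ => by ring
    have e3 : x a * (∑ b : V, (H.dist a b : ℝ) * x b) = ∑ b : V, (H.dist a b : ℝ) * (x a * x b) := by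
      rw [Finset.mul_sum]
      exact Finset.sum_congr rfl fun b _ => by ring
    rw [e2, e3]
  have h1 : ∑ a : V, ∑ b : V, (H.dist a b : ℝ) * (x a - x b) ^ 2
      = (∑ a : V, ∑ b : V, (H.dist a b : ℝ) * x a ^ 2)
        + (∑ a : V, ∑ b : V, (H.dist a b : ℝ) * x b ^ 2)
        - 2 * ∑ a : V, ∑ b : V, (H.dist a b : ℝ) * (x a * x b) := by
    rw [Finset.mul_sum, ← Finset.sum_add_distrib, ← Finset.sum_sub_distrib]
    refine Finset.sum_congr rfl fun a _ => ?_
    rw [Finset.mul_sum, ← Finset.sum_add_distrib, ← Finset.sum_sub_distrib]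
    exact Finset.sum_congr rfl fun b _ => by ring
  rw [h1, h2, hR]
  ring

end Aux

/-- Lemma 2.1: Let `G = G₁ ∪ G₂ ∪ G₃` be connected, where the `Gᵢ` are connected induced
subgraphs on vertex sets `Sᵢ`, each with at least two vertices, pairwise intersecting exactly
in `{v₀}`, every edge of `G` lying in some `Gᵢ`.  Let `u ∈ S₂ \ {v₀}` and let `G̃` be obtained
from `G` by moving `G₃` from `v₀` to `u` (deleting all edges between `v₀` and its neighbours in
`G₃` and joining `u` to those neighbours instead).  Let `x` be a unit eigenvector of `L_D(G)`
for `ρ_L(G)`.  Then: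
(i) if `∑_{i ∈ S₃\{v₀}} ∑_{j ∈ S₁} (xᵢ - xⱼ)² ≥ ∑_{i ∈ S₃\{v₀}} ∑_{j ∈ S₂} (xᵢ - xⱼ)²`
then `ρ_L(G̃) ≥ ρ_L(G)`;
(ii) if the inequality is strict then `ρ_L(G̃) > ρ_L(G)`. -/
theorem rhoL_graft_transformation {V : Type} [Fintype V] [DecidableEq V]
    (G Gt : SimpleGraph V) (hG : G.Connected)
    (S₁ S₂ S₃ : Finset V) (v₀ u : V)
    (hcover : S₁ ∪ S₂ ∪ S₃ = Finset.univ)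
    (h12 : S₁ ∩ S₂ = {v₀}) (h13 : S₁ ∩ S₃ = {v₀}) (h23 : S₂ ∩ S₃ = {v₀})
    (hc1 : 2 ≤ S₁.card) (hc2 : 2 ≤ S₂.card) (hc3 : 2 ≤ S₃.card)
    (hconn1 : (SimpleGraph.induce (↑S₁ : Set V) G).Connected)
    (hconn2 : (SimpleGraph.induce (↑S₂ : Set V) G).Connected)
    (hconn3 : (SimpleGraph.induce (↑S₃ : Set V) G).Connected)
    (hedges : ∀ a b : V, G.Adj a b →
      (a ∈ S₁ ∧ b ∈ S₁) ∨ (a ∈ S₂ ∧ b ∈ S₂) ∨ (a ∈ S₃ ∧ b ∈ S₃))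
    (hu : u ∈ S₂) (huv₀ : u ≠ v₀)
    (hGt : ∀ a b : V, Gt.Adj a b ↔
      ((G.Adj a b ∧ ¬(a = v₀ ∧ b ∈ S₃ ∧ G.Adj v₀ b) ∧ ¬(b = v₀ ∧ a ∈ S₃ ∧ G.Adj v₀ a)) ∨
        (a = u ∧ b ∈ S₃ ∧ G.Adj v₀ b) ∨ (b = u ∧ a ∈ S₃ ∧ G.Adj v₀ a)))
    (x : V → ℝ) (hunit : ∑ v : V, x v ^ 2 = 1)
    (heig : (distLaplacian G).mulVec x = rhoL G • x) :
    ((∑ i ∈ S₃.erase v₀, ∑ j ∈ S₁, (x i - x j) ^ 2 ≥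
        ∑ i ∈ S₃.erase v₀, ∑ j ∈ S₂, (x i - x j) ^ 2 → rhoL Gt ≥ rhoL G) ∧
     (∑ i ∈ S₃.erase v₀, ∑ j ∈ S₁, (x i - x j) ^ 2 >
        ∑ i ∈ S₃.erase v₀, ∑ j ∈ S₂, (x i - x j) ^ 2 → rhoL Gt > rhoL G)) := by
  classical
  haveI : Nonempty V := ⟨u⟩
  -- basic membership facts
  have hv₀3 : v₀ ∈ S₃ := by
    have h := Finset.mem_singleton_self v₀
    rw [← h13] at h
    exact (Finset.mem_inter.mp h).2
  have hv₀1 : v₀ ∈ S₁ := by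
    have h := Finset.mem_singleton_self v₀
    rw [← h13] at h
    exact (Finset.mem_inter.mp h).1
  have hv₀2 : v₀ ∈ S₂ := by
    have h := Finset.mem_singleton_self v₀
    rw [← h23] at h
    exact (Finset.mem_inter.mp h).1
  have hmem12 : ∀ a, a ∈ S₁ → a ∈ S₂ → a = v₀ := fun a ha hb =>
    Finset.mem_singleton.mp (h12 ▸ Finset.mem_inter.mpr ⟨ha, hb⟩)
  have hmem13 : ∀ a, a ∈ S₁ → a ∈ S₃ → a = v₀ := fun a ha hb =>
    Finset.mem_singleton.mp (h13 ▸ Finset.mem_inter.mpr ⟨ha, hb⟩)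
  have hmem23 : ∀ a, a ∈ S₂ → a ∈ S₃ → a = v₀ := fun a ha hb =>
    Finset.mem_singleton.mp (h23 ▸ Finset.mem_inter.mpr ⟨ha, hb⟩)
  have hu1 : u ∉ S₁ := fun h => huv₀ (hmem12 u h hu)
  have hu3 : u ∉ S₃ := fun h => huv₀ (hmem23 u hu h)
  have huB : u ∈ S₁ ∪ S₂ := Finset.mem_union_right _ hu
  have hv₀B : v₀ ∈ S₁ ∪ S₂ := Finset.mem_union_left _ hv₀1
  have hcoverB : ∀ c : V, c ∉ S₃ → c ∈ S₁ ∪ S₂ := by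
    intro c hc
    have : c ∈ S₁ ∪ S₂ ∪ S₃ := hcover ▸ Finset.mem_univ c
    rcases Finset.mem_union.mp this with h | h
    · exact h
    · exact absurd h hc
  -- cut-vertex edge conditions in G
  have hcut3 : ∀ a b : V, a ∈ S₃ → a ≠ v₀ → G.Adj a b → b ∈ S₃ := by
    intro a b ha hav hadj
    rcases hedges a b hadj with ⟨h1, _⟩ | ⟨h2, _⟩ | ⟨_, h3⟩
    · exact absurd (hmem13 a h1 ha) hav
    · exact absurd (hmem23 a h2 ha) hav
    · exact h3
  have hcut2 : ∀ a b : V, a ∈ S₂ → a ≠ v₀ → G.Adj a b → b ∈ S₂ := by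
    intro a b ha hav hadj
    rcases hedges a b hadj with ⟨h1, _⟩ | ⟨_, h2⟩ | ⟨h3, _⟩
    · exact absurd (hmem12 a h1 ha) hav
    · exact h2
    · exact absurd (hmem23 a ha h3) hav
  have hcutB : ∀ a b : V, a ∈ S₁ ∪ S₂ → a ≠ v₀ → G.Adj a b → b ∈ S₁ ∪ S₂ := by
    intro a b ha hav hadj
    rcases hedges a b hadj with ⟨h1, hb1⟩ | ⟨h2, hb2⟩ | ⟨h3, _⟩
    · exact Finset.mem_union_left _ hb1
    · exact Finset.mem_union_right _ hb2
    · rcases Finset.mem_union.mp ha with h | h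
      · exact absurd (hmem13 a h h3) hav
      · exact absurd (hmem23 a h h3) hav
  -- Gt edge conditions
  have hGtadjA : ∀ a b : V, a ∈ S₃ → a ≠ v₀ → Gt.Adj a b → b ∈ insert u (S₃.erase v₀) := by
    intro a b ha hav hadj
    rcases (hGt a b).mp hadj with ⟨hab, _, hnb⟩ | ⟨hau, _, _⟩ | ⟨hbu, _, _⟩
    · have hb3 : b ∈ S₃ := hcut3 a b ha hav hab
      have hbv : b ≠ v₀ := by rintro rfl; exact hnb ⟨rfl, ha, hab.symm⟩
      exact Finset.mem_insert_of_mem (Finset.mem_erase.mpr ⟨hbv, hb3⟩)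
    · exact absurd (hau ▸ ha) hu3
    · rw [hbu]; exact Finset.mem_insert_self u _
  have hcutT : ∀ a b : V, a ∈ insert u (S₃.erase v₀) → a ≠ u → Gt.Adj a b →
      b ∈ insert u (S₃.erase v₀) := by
    intro a b ha hau hadj
    rcases Finset.mem_insert.mp ha with rfl | ha'
    · exact absurd rfl hau
    · obtain ⟨hav, ha3⟩ := Finset.mem_erase.mp ha'
      exact hGtadjA a b ha3 hav hadj
  have hcutBt : ∀ a b : V, a ∈ S₁ ∪ S₂ → a ≠ u → Gt.Adj a b → b ∈ S₁ ∪ S₂ := by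
    intro a b ha hau hadj
    rcases (hGt a b).mp hadj with ⟨hab, hna, _⟩ | ⟨hau', _, _⟩ | ⟨hbu, _, _⟩
    · by_cases hav : a = v₀
      · subst hav
        by_cases hb3 : b ∈ S₃
        · exact absurd ⟨rfl, hb3, hab⟩ hna
        · exact hcoverB b hb3
      · exact hcutB a b ha hav hab
    · exact absurd hau' hau
    · exact hbu ▸ huB
  -- edge transfer conditions
  have hf3 : ∀ a b : V, a ∈ S₃ → b ∈ S₃ → G.Adj a b →
      Gt.Adj (if a = v₀ then u else a) (if b = v₀ then u else b) := by
    intro a b ha hb hadj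
    by_cases hav : a = v₀ <;> by_cases hbv : b = v₀
    · rw [hav, hbv] at hadj
      exact absurd hadj (G.loopless.irrefl v₀)
    · rw [if_pos hav, if_neg hbv]
      rw [hav] at hadj
      exact (hGt u b).mpr (Or.inr (Or.inl ⟨rfl, hb, hadj⟩))
    · rw [if_neg hav, if_pos hbv]
      rw [hbv] at hadj
      exact (hGt a u).mpr (Or.inr (Or.inr ⟨rfl, ha, hadj.symm⟩))
    · rw [if_neg hav, if_neg hbv]
      exact (hGt a b).mpr (Or.inl ⟨hadj, fun h => hav h.1, fun h => hbv h.1⟩)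
  have hg3 : ∀ a b : V, a ∈ insert u (S₃.erase v₀) → b ∈ insert u (S₃.erase v₀) → Gt.Adj a b →
      G.Adj (if a = u then v₀ else a) (if b = u then v₀ else b) := by
    intro a b ha hb hadj
    have hne := hadj.ne
    rcases Finset.mem_insert.mp ha with hau | ha'
    · have hbu : b ≠ u := fun h => hne (hau.trans h.symm)
      rcases Finset.mem_insert.mp hb with hbu' | hb'
      · exact absurd (hau.trans hbu'.symm) hne
      · obtain ⟨hbv, hb3⟩ := Finset.mem_erase.mp hb'
        rw [if_pos hau, if_neg hbu]
        rw [hau] at hadj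
        rcases (hGt u b).mp hadj with ⟨hab, _, _⟩ | ⟨_, _, hvb⟩ | ⟨hbu', _, _⟩
        · -- G.Adj u b with u ∈ S₂ \ {v₀}, b ∈ S₃ \ {v₀}: impossible
          have hb2 : b ∈ S₂ := hcut2 u b hu huv₀ hab
          exact absurd (hmem23 b hb2 hb3) hbv
        · exact hvb
        · exact absurd hbu' hbu
    · obtain ⟨hav, ha3⟩ := Finset.mem_erase.mp ha'
      have hau : a ≠ u := fun h => hu3 (h ▸ ha3)
      rcases Finset.mem_insert.mp hb with hbu | hb'
      · rw [if_neg hau, if_pos hbu]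
        rw [hbu] at hadj
        rcases (hGt a u).mp hadj with ⟨hab, _, _⟩ | ⟨hau', _, _⟩ | ⟨_, _, hva⟩
        · have ha2 : a ∈ S₂ := hcut2 u a hu huv₀ hab.symm
          exact absurd (hmem23 a ha2 ha3) hav
        · exact absurd hau' hau
        · exact hva.symm
      · obtain ⟨hbv, hb3⟩ := Finset.mem_erase.mp hb'
        have hbu : b ≠ u := fun h => hu3 (h ▸ hb3)
        rw [if_neg hau, if_neg hbu]
        rcases (hGt a b).mp hadj with ⟨hab, _, _⟩ | ⟨hau', _, _⟩ | ⟨hbu', _, _⟩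
        · exact hab
        · exact absurd hau' hau
        · exact absurd hbu' hbu
  have hfB : ∀ a b : V, a ∈ S₁ ∪ S₂ → b ∈ S₁ ∪ S₂ → G.Adj a b → Gt.Adj a b := by
    intro a b ha hb hadj
    refine (hGt a b).mpr (Or.inl ⟨hadj, ?_, ?_⟩)
    · rintro ⟨hav, hb3, _⟩
      have hbv : b = v₀ := by
        rcases Finset.mem_union.mp hb with h | h
        · exact hmem13 b h hb3
        · exact hmem23 b h hb3
      rw [hav, hbv] at hadj
      exact G.loopless.irrefl v₀ hadj
    · rintro ⟨hbv, ha3, _⟩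
      have hav : a = v₀ := by
        rcases Finset.mem_union.mp ha with h | h
        · exact hmem13 a h ha3
        · exact hmem23 a h ha3
      rw [hav, hbv] at hadj
      exact G.loopless.irrefl v₀ hadj
  have hgB : ∀ a b : V, a ∈ S₁ ∪ S₂ → b ∈ S₁ ∪ S₂ → Gt.Adj a b → G.Adj a b := by
    intro a b ha hb hadj
    rcases (hGt a b).mp hadj with ⟨hab, _, _⟩ | ⟨_, hb3, hvb⟩ | ⟨_, ha3, hva⟩
    · exact hab
    · have hbv : b = v₀ := by
        rcases Finset.mem_union.mp hb with h | h
        · exact hmem13 b h hb3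
        · exact hmem23 b h hb3
      rw [hbv] at hvb
      exact absurd hvb (G.loopless.irrefl v₀)
    · have hav : a = v₀ := by
        rcases Finset.mem_union.mp ha with h | h
        · exact hmem13 a h ha3
        · exact hmem23 a h ha3
      rw [hav] at hva
      exact absurd hva (G.loopless.irrefl v₀)
  -- connectivity of Gt
  have hreachu : ∀ a : V, Gt.Reachable a u := by
    intro a
    by_cases hav : a = v₀
    · -- use the B-side transfer with the identity
      have h := reach_transfer (fun c => c) hcutB hv₀B hfB (hG a u) (hav ▸ hv₀B) huB
      exact h
    · by_cases ha3 : a ∈ S₃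
      · have h := reach_transfer (fun c => if c = v₀ then u else c) hcut3 hv₀3 hf3
          (hG a v₀) ha3 hv₀3
        simpa [if_neg hav] using h
      · have h := reach_transfer (fun c => c) hcutB hv₀B hfB (hG a u) (hcoverB a ha3) huB
        exact h
  have hGtconn : Gt.Connected := by
    rw [SimpleGraph.connected_iff]
    exact ⟨fun a b => (hreachu a).trans (hreachu b).symm, ⟨u⟩⟩
  -- main distance identities
  have hL3 : ∀ a b : V, a ∈ S₃ → b ∈ S₃ →
      Gt.dist (if a = v₀ then u else a) (if b = v₀ then u else b) = G.dist a b := by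
    intro a b ha hb
    have hgf : ∀ c, c ∈ S₃ →
        (if (if c = v₀ then u else c) = u then v₀ else (if c = v₀ then u else c)) = c := by
      intro c hc
      by_cases hcv : c = v₀
      · simp [hcv]
      · have hcu : c ≠ u := fun h => hu3 (h ▸ hc)
        simp [hcv, hcu]
    have hmemT : ∀ c, c ∈ S₃ → (if c = v₀ then u else c) ∈ insert u (S₃.erase v₀) := by
      intro c hc
      by_cases hcv : c = v₀
      · simp [hcv]
      · rw [if_neg hcv]
        exact Finset.mem_insert_of_mem (Finset.mem_erase.mpr ⟨hcv, hc⟩)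
    apply le_antisymm
    · exact dist_transfer _ hcut3 hv₀3 hf3 (hG a b) ha hb
    · have h := dist_transfer (fun c => if c = u then v₀ else c) hcutT
        (Finset.mem_insert_self u _) hg3 (hGtconn (if a = v₀ then u else a) (if b = v₀ then u else b))
        (hmemT a ha) (hmemT b hb)
      simp only [hgf a ha, hgf b hb] at h
      exact h
  have hLB : ∀ a b : V, a ∈ S₁ ∪ S₂ → b ∈ S₁ ∪ S₂ → Gt.dist a b = G.dist a b := by
    intro a b ha hb
    apply le_antisymm
    · exact dist_transfer (fun c => c) hcutB hv₀B hfB (hG a b) ha hb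
    · exact dist_transfer (fun c => c) hcutBt huB hgB (hGtconn a b) ha hb
  -- splitting identities
  have hsplit3 : ∀ i j : V, i ∈ S₃ → j ∉ S₃ → G.dist i j = G.dist i v₀ + G.dist v₀ j :=
    fun i j hi hj => dist_split hG hcut3 hi hj
  have hsplit2 : ∀ i j : V, i ∈ S₂ → j ∉ S₂ → G.dist i j = G.dist i v₀ + G.dist v₀ j :=
    fun i j hi hj => dist_split hG hcut2 hi hj
  have hsplitT : ∀ i j : V, i ∈ insert u (S₃.erase v₀) → j ∉ insert u (S₃.erase v₀) →
      Gt.dist i j = Gt.dist i u + Gt.dist u j :=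
    fun i j hi hj => dist_split hGtconn hcutT hi hj
  -- the key distance comparison facts
  have hδpos : 0 < G.dist u v₀ := hG.pos_dist_of_ne huv₀
  have hF1 : ∀ i ∈ S₃.erase v₀, ∀ j ∈ S₁, Gt.dist i j = G.dist i j + G.dist u v₀ := by
    intro i hi j hj
    obtain ⟨hiv, hi3⟩ := Finset.mem_erase.mp hi
    have hiu : i ≠ u := fun h => hu3 (h ▸ hi3)
    have hiT : i ∈ insert u (S₃.erase v₀) := Finset.mem_insert_of_mem hi
    have hiu3 : Gt.dist i u = G.dist i v₀ := by
      have := hL3 i v₀ hi3 hv₀3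
      simpa [if_neg hiv] using this
    by_cases hjv : j = v₀
    · rw [hjv]
      have hjT : v₀ ∉ insert u (S₃.erase v₀) := by
        simp [Ne.symm huv₀]
      rw [hsplitT i v₀ hiT hjT, hiu3, hLB u v₀ huB hv₀B]
    · have hj3 : j ∉ S₃ := fun h => hjv (hmem13 j hj h)
      have hj2 : j ∉ S₂ := fun h => hjv (hmem12 j hj h)
      have hju : j ≠ u := fun h => hu1 (h ▸ hj)
      have hjT : j ∉ insert u (S₃.erase v₀) := by
        simp only [Finset.mem_insert, Finset.mem_erase, not_or]
        exact ⟨hju, fun h => hj3 h.2⟩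
      have hjB : j ∈ S₁ ∪ S₂ := Finset.mem_union_left _ hj
      rw [hsplitT i j hiT hjT, hiu3, hLB u j huB hjB, hsplit2 u j hu hj2,
        hsplit3 i j hi3 hj3]
      ring
  have hF2 : ∀ i ∈ S₃.erase v₀, ∀ j ∈ S₂.erase v₀, G.dist i j ≤ Gt.dist i j + G.dist u v₀ := by
    intro i hi j hj
    obtain ⟨hiv, hi3⟩ := Finset.mem_erase.mp hi
    obtain ⟨hjv, hj2⟩ := Finset.mem_erase.mp hj
    have hiu : i ≠ u := fun h => hu3 (h ▸ hi3)
    have hiT : i ∈ insert u (S₃.erase v₀) := Finset.mem_insert_of_mem hi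
    have hj3 : j ∉ S₃ := fun h => hjv (hmem23 j hj2 h)
    have hjB : j ∈ S₁ ∪ S₂ := Finset.mem_union_right _ hj2
    have hiu3 : Gt.dist i u = G.dist i v₀ := by
      have := hL3 i v₀ hi3 hv₀3
      simpa [if_neg hiv] using this
    have e1 : Gt.dist i j = G.dist i v₀ + G.dist u j := by
      by_cases hju : j = u
      · rw [hju, hiu3, SimpleGraph.dist_self, add_zero]
      · have hjT : j ∉ insert u (S₃.erase v₀) := by
          simp only [Finset.mem_insert, Finset.mem_erase, not_or]
          exact ⟨hju, fun h => hj3 h.2⟩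
        rw [hsplitT i j hiT hjT, hiu3, hLB u j huB hjB]
    have e4 : G.dist i j = G.dist i v₀ + G.dist v₀ j := hsplit3 i j hi3 hj3
    have e5 : G.dist v₀ j ≤ G.dist v₀ u + G.dist u j := hG.dist_triangle
    have e6 : G.dist v₀ u = G.dist u v₀ := SimpleGraph.dist_comm ..
    omega
  have hF4 : ∀ i ∈ S₃.erase v₀, ∀ j ∈ S₃.erase v₀, Gt.dist i j = G.dist i j := by
    intro i hi j hj
    obtain ⟨hiv, hi3⟩ := Finset.mem_erase.mp hi
    obtain ⟨hjv, hj3⟩ := Finset.mem_erase.mp hj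
    have := hL3 i j hi3 hj3
    simpa [if_neg hiv, if_neg hjv] using this
  -- the real-valued difference function
  set F : V → V → ℝ := fun a b => ((Gt.dist a b : ℝ) - (G.dist a b : ℝ)) * (x a - x b) ^ 2 with hF
  have hPsymm : ∀ a b : V, F a b = F b a := by
    intro a b
    rw [hF]
    simp only
    rw [SimpleGraph.dist_comm (G := Gt), SimpleGraph.dist_comm (G := G)]
    ring
  -- decomposition of the universe
  have hU : (S₃.erase v₀) ∪ (S₁ ∪ S₂) = Finset.univ := by
    apply Finset.eq_univ_iff_forall.mpr
    intro c
    by_cases hc3 : c ∈ S₃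
    · by_cases hcv : c = v₀
      · rw [hcv]; exact Finset.mem_union_right _ hv₀B
      · exact Finset.mem_union_left _ (Finset.mem_erase.mpr ⟨hcv, hc3⟩)
    · exact Finset.mem_union_right _ (hcoverB c hc3)
  have hdisjAB : Disjoint (S₃.erase v₀) (S₁ ∪ S₂) := by
    rw [Finset.disjoint_left]
    intro c hc hcB
    obtain ⟨hcv, hc3⟩ := Finset.mem_erase.mp hc
    rcases Finset.mem_union.mp hcB with h | h
    · exact hcv (hmem13 c h hc3)
    · exact hcv (hmem23 c h hc3)
  have hsplit_univ : ∀ h : V → ℝ,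
      ∑ a : V, h a = ∑ a ∈ S₃.erase v₀, h a + ∑ a ∈ S₁ ∪ S₂, h a := by
    intro h
    rw [← Finset.sum_union hdisjAB, hU]
  have hAA : ∑ i ∈ S₃.erase v₀, ∑ j ∈ S₃.erase v₀, F i j = 0 := by
    refine Finset.sum_eq_zero fun i hi => Finset.sum_eq_zero fun j hj => ?_
    rw [hF]
    simp only
    rw [hF4 i hi j hj, sub_self, zero_mul]
  have hBB : ∑ i ∈ S₁ ∪ S₂, ∑ j ∈ S₁ ∪ S₂, F i j = 0 := by
    refine Finset.sum_eq_zero fun i hi => Finset.sum_eq_zero fun j hj => ?_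
    rw [hF]
    simp only
    rw [hLB i j hi hj, sub_self, zero_mul]
  have hBA : ∑ i ∈ S₁ ∪ S₂, ∑ j ∈ S₃.erase v₀, F i j
      = ∑ i ∈ S₃.erase v₀, ∑ j ∈ S₁ ∪ S₂, F i j := by
    rw [Finset.sum_comm]
    exact Finset.sum_congr rfl fun i _ => Finset.sum_congr rfl fun j _ => hPsymm j i
  have hsumP : ∑ a : V, ∑ b : V, F a b = 2 * ∑ i ∈ S₃.erase v₀, ∑ j ∈ S₁ ∪ S₂, F i j := by
    rw [hsplit_univ (fun a => ∑ b : V, F a b)]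
    rw [Finset.sum_congr rfl (fun a (_ : a ∈ S₃.erase v₀) => hsplit_univ (fun b => F a b)),
      Finset.sum_congr rfl (fun a (_ : a ∈ S₁ ∪ S₂) => hsplit_univ (fun b => F a b))]
    rw [Finset.sum_add_distrib, Finset.sum_add_distrib, hAA, hBB, hBA]
    ring
  -- splitting the B-sum
  have hB2 : S₁ ∪ S₂ = S₁ ∪ S₂.erase v₀ := by
    ext c
    simp only [Finset.mem_union, Finset.mem_erase]
    constructor
    · rintro (h | h)
      · exact Or.inl h
      · by_cases hcv : c = v₀
        · exact Or.inl (by rw [hcv]; exact hv₀1)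
        · exact Or.inr ⟨hcv, h⟩
    · rintro (h | ⟨_, h⟩)
      · exact Or.inl h
      · exact Or.inr h
  have hdisj12 : Disjoint S₁ (S₂.erase v₀) := by
    rw [Finset.disjoint_left]
    intro c hc hc2
    obtain ⟨hcv, hc2'⟩ := Finset.mem_erase.mp hc2
    exact hcv (hmem12 c hc hc2')
  have hδ0 : (0:ℝ) < (G.dist u v₀ : ℝ) := by exact_mod_cast hδpos
  have hb1 : ∀ i ∈ S₃.erase v₀, ∑ j ∈ S₁, F i j
      = (G.dist u v₀ : ℝ) * ∑ j ∈ S₁, (x i - x j) ^ 2 := by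
    intro i hi
    rw [Finset.mul_sum]
    refine Finset.sum_congr rfl fun j hj => ?_
    rw [hF]
    simp only
    rw [hF1 i hi j hj]
    push_cast
    ring
  have hb2 : ∀ i ∈ S₃.erase v₀,
      -((G.dist u v₀ : ℝ) * ∑ j ∈ S₂, (x i - x j) ^ 2) ≤ ∑ j ∈ S₂.erase v₀, F i j := by
    intro i hi
    have step1 : ∀ j ∈ S₂.erase v₀, -((G.dist u v₀ : ℝ) * (x i - x j) ^ 2) ≤ F i j := by
      intro j hj
      have h := hF2 i hi j hj
      have hcast : (G.dist i j : ℝ) ≤ (Gt.dist i j : ℝ) + (G.dist u v₀ : ℝ) := by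
        exact_mod_cast h
      have hw : (0:ℝ) ≤ (x i - x j) ^ 2 := sq_nonneg _
      rw [hF]
      simp only
      nlinarith
    have hsub : ∑ j ∈ S₂.erase v₀, (x i - x j) ^ 2 ≤ ∑ j ∈ S₂, (x i - x j) ^ 2 :=
      Finset.sum_le_sum_of_subset_of_nonneg (Finset.erase_subset _ _) (fun j _ _ => sq_nonneg _)
    calc -((G.dist u v₀ : ℝ) * ∑ j ∈ S₂, (x i - x j) ^ 2)
        ≤ -((G.dist u v₀ : ℝ) * ∑ j ∈ S₂.erase v₀, (x i - x j) ^ 2) := by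
          have := mul_le_mul_of_nonneg_left hsub (le_of_lt hδ0)
          linarith
      _ = ∑ j ∈ S₂.erase v₀, -((G.dist u v₀ : ℝ) * (x i - x j) ^ 2) := by
          rw [Finset.mul_sum, Finset.sum_neg_distrib]
      _ ≤ ∑ j ∈ S₂.erase v₀, F i j := Finset.sum_le_sum step1
  -- the key inequality on the double sum
  have hkey : (G.dist u v₀ : ℝ) *
      ((∑ i ∈ S₃.erase v₀, ∑ j ∈ S₁, (x i - x j) ^ 2)
        - ∑ i ∈ S₃.erase v₀, ∑ j ∈ S₂, (x i - x j) ^ 2)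
      ≤ ∑ i ∈ S₃.erase v₀, ∑ j ∈ S₁ ∪ S₂, F i j := by
    have hper : ∀ i ∈ S₃.erase v₀,
        (G.dist u v₀ : ℝ) * ∑ j ∈ S₁, (x i - x j) ^ 2
          - (G.dist u v₀ : ℝ) * ∑ j ∈ S₂, (x i - x j) ^ 2 ≤ ∑ j ∈ S₁ ∪ S₂, F i j := by
      intro i hi
      rw [hB2, Finset.sum_union hdisj12]
      have h1 := hb1 i hi
      have h2 := hb2 i hi
      linarith
    calc (G.dist u v₀ : ℝ) * ((∑ i ∈ S₃.erase v₀, ∑ j ∈ S₁, (x i - x j) ^ 2)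
          - ∑ i ∈ S₃.erase v₀, ∑ j ∈ S₂, (x i - x j) ^ 2)
        = ∑ i ∈ S₃.erase v₀, ((G.dist u v₀ : ℝ) * ∑ j ∈ S₁, (x i - x j) ^ 2
            - (G.dist u v₀ : ℝ) * ∑ j ∈ S₂, (x i - x j) ^ 2) := by
          rw [Finset.sum_sub_distrib, ← Finset.mul_sum, ← Finset.mul_sum]
          ring
      _ ≤ _ := Finset.sum_le_sum hper
  -- spectral facts
  have hxLG : x ⬝ᵥ (distLaplacian G).mulVec x = rhoL G := by
    rw [heig]
    have h : x ⬝ᵥ (rhoL G • x) = rhoL G * ∑ v : V, x v ^ 2 := by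
      simp only [dotProduct, Pi.smul_apply, smul_eq_mul, Finset.mul_sum]
      exact Finset.sum_congr rfl fun v _ => by ring
    rw [h, hunit, mul_one]
  have hQG : ∑ a : V, ∑ b : V, (G.dist a b : ℝ) * (x a - x b) ^ 2 = 2 * rhoL G := by
    rw [quad_form, hxLG]
  have hRt : x ⬝ᵥ (distLaplacian Gt).mulVec x ≤ rhoL Gt := by
    rw [rhoL]
    exact rayleigh_le_sSup (distLaplacian Gt) (distLaplacian_isHermitian Gt) x hunit
  have hQt : ∑ a : V, ∑ b : V, (Gt.dist a b : ℝ) * (x a - x b) ^ 2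
      ≤ 2 * rhoL Gt := by
    rw [quad_form]
    linarith
  have hFdef : ∑ a : V, ∑ b : V, F a b
      = (∑ a : V, ∑ b : V, (Gt.dist a b : ℝ) * (x a - x b) ^ 2)
        - ∑ a : V, ∑ b : V, (G.dist a b : ℝ) * (x a - x b) ^ 2 := by
    rw [← Finset.sum_sub_distrib]
    refine Finset.sum_congr rfl fun a _ => ?_
    rw [← Finset.sum_sub_distrib]
    refine Finset.sum_congr rfl fun b _ => ?_
    rw [hF]
    simp only
    ring
  -- conclusion
  have hmain : 2 * rhoL G + 2 * ((G.dist u v₀ : ℝ) *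
      ((∑ i ∈ S₃.erase v₀, ∑ j ∈ S₁, (x i - x j) ^ 2)
        - ∑ i ∈ S₃.erase v₀, ∑ j ∈ S₂, (x i - x j) ^ 2)) ≤ 2 * rhoL Gt := by
    have e := hFdef
    rw [hsumP, hQG] at e
    -- e : 2 * Σ_AB F = Σ Dt w - 2 rhoL G
    linarith [hQt, hkey]
  constructor
  · intro hge
    have hnn : (0:ℝ) ≤ (∑ i ∈ S₃.erase v₀, ∑ j ∈ S₁, (x i - x j) ^ 2)
        - ∑ i ∈ S₃.erase v₀, ∑ j ∈ S₂, (x i - x j) ^ 2 := by linarith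
    nlinarith
  · intro hgt
    have hpos : (0:ℝ) < (∑ i ∈ S₃.erase v₀, ∑ j ∈ S₁, (x i - x j) ^ 2)
        - ∑ i ∈ S₃.erase v₀, ∑ j ∈ S₂, (x i - x j) ^ 2 := by linarith
    nlinarith
end

section
/- (Lemma 3.1) Let G = G₁ ∪ G₂ ∪ G₃ be a connected graph, where G₁, G₂, G₃ are connected subgraphs, each with at least 2 vertices, such that V(Gᵢ) ∩ V(Gⱼ) = {v₀} for all 1 ≤ i ≠ j ≤ 3 and every edge of G lies in some Gᵢ. Let u ∈ V(G₂)\{v₀}, and let G̃ be the graph obtained from G by moving G₃ from v₀ to u. Let x be a positive (Perron) eigenvector of Q_D(G) corresponding to ρ_Q(G), writing x_v = x(v). If Σ_{v_i ∈ V(G₃)\{v₀}} Σ_{v_j ∈ V(G₁)} (x_{v_i} + x_{v_j})² ≥ Σ_{v_i ∈ V(G₃)\{v₀}} Σ_{v_j ∈ V(G₂)} (x_{v_i} + x_{v_j})², then ρ_Q(G̃) > ρ_Q(G). -/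
open Matrix Finset
open scoped RealInnerProductSpace
set_option linter.unusedSectionVars false
set_option maxHeartbeats 1000000

/-- The distance signless Laplacian matrix `Q_D(G) = Tr(G) + D(G)`. -/
noncomputable def distSignlessLaplacian {V : Type*} [Fintype V] (G : SimpleGraph V) :
    Matrix V V ℝ := fun u v =>
  letI := Classical.decEq V
  (if u = v then transmission G u else 0) + (G.dist u v : ℝ)

/-- The largest eigenvalue of the distance signless Laplacian. -/
noncomputable def rhoQ {V : Type*} [Fintype V] (G : SimpleGraph V) : ℝ :=
  sSup {μ : ℝ | ∃ x : V → ℝ, x ≠ 0 ∧ (distSignlessLaplacian G).mulVec x = μ • x}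

section Spectral

variable {n : Type} [Fintype n] [DecidableEq n]

lemma aux_dot_self_pos {y : n → ℝ} (hy : y ≠ 0) : 0 < y ⬝ᵥ y := by
  have h0 : ∀ i ∈ Finset.univ, (0:ℝ) ≤ y i * y i := fun i _ => mul_self_nonneg _
  rcases lt_or_eq_of_le (Finset.sum_nonneg h0) with h | h
  · exact h
  · exfalso; apply hy; funext i
    have := (Finset.sum_eq_zero_iff_of_nonneg h0).mp h.symm i (Finset.mem_univ i)
    exact mul_self_eq_zero.mp this

lemma aux_inner_euclid (a b : EuclideanSpace ℝ n) : ⟪a, b⟫ = (a : n → ℝ) ⬝ᵥ b := by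
  simp [PiLp.inner_apply, dotProduct, mul_comm]

lemma aux_herm_dot {A : Matrix n n ℝ} (hA : A.IsHermitian) (a b : n → ℝ) :
    a ⬝ᵥ (A *ᵥ b) = (A *ᵥ a) ⬝ᵥ b := by
  rw [Matrix.dotProduct_mulVec, ← Matrix.mulVec_transpose]
  have : Aᵀ = A := hA
  rw [this]

lemma aux_rayleigh_bound [Nonempty n] {A : Matrix n n ℝ} (hA : A.IsHermitian) (y : n → ℝ) :
    y ⬝ᵥ (A *ᵥ y) ≤ (⨆ i, hA.eigenvalues i) * (y ⬝ᵥ y) := by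
  set M := ⨆ i, hA.eigenvalues i with hM
  have hbdd : BddAbove (Set.range hA.eigenvalues) := Set.Finite.bddAbove (Set.finite_range _)
  set b := hA.eigenvectorBasis with hb
  set Y : EuclideanSpace ℝ n := WithLp.toLp 2 y with hY
  have hAY : ∀ i, ⟪b i, (WithLp.toLp 2 (A *ᵥ y) : EuclideanSpace ℝ n)⟫ = hA.eigenvalues i * ⟪b i, Y⟫ := by
    intro i
    rw [aux_inner_euclid, WithLp.ofLp_toLp, aux_herm_dot hA]
    have h1 : A *ᵥ (b i) = hA.eigenvalues i • (b i) := hA.mulVec_eigenvectorBasis i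
    rw [h1]
    rw [show ⟪b i, Y⟫ = (b i : n → ℝ) ⬝ᵥ y from aux_inner_euclid _ _]
    exact smul_dotProduct _ _ _
  have key : y ⬝ᵥ (A *ᵥ y) = ∑ i, hA.eigenvalues i * (⟪b i, Y⟫ * ⟪b i, Y⟫) := by
    have := b.sum_inner_mul_inner Y (WithLp.toLp 2 (A *ᵥ y) : EuclideanSpace ℝ n)
    rw [aux_inner_euclid] at this
    refine this.symm.trans ?_
    refine Finset.sum_congr rfl fun i _ => ?_
    rw [hAY i, real_inner_comm Y (b i)]
    ring
  have key2 : y ⬝ᵥ y = ∑ i, ⟪b i, Y⟫ * ⟪b i, Y⟫ := by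
    have := b.sum_inner_mul_inner Y Y
    rw [aux_inner_euclid] at this
    refine this.symm.trans ?_
    refine Finset.sum_congr rfl fun i _ => ?_
    rw [real_inner_comm Y (b i)]
  rw [key, key2, Finset.mul_sum]
  refine Finset.sum_le_sum fun i _ => ?_
  exact mul_le_mul_of_nonneg_right (le_ciSup hbdd i) (mul_self_nonneg _)

lemma aux_eigen_basis_ne_zero [Nonempty n] {A : Matrix n n ℝ} (hA : A.IsHermitian) (i : n) :
    (hA.eigenvectorBasis i : n → ℝ) ≠ 0 := by
  intro h
  have h1 : ‖hA.eigenvectorBasis i‖ = 1 := hA.eigenvectorBasis.orthonormal.1 i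
  rw [show (hA.eigenvectorBasis i : EuclideanSpace ℝ n) = 0 from by simpa using congrArg (WithLp.toLp 2) h] at h1
  simp at h1

lemma aux_dsl_herm (G : SimpleGraph n) : (distSignlessLaplacian G).IsHermitian := by
  unfold Matrix.IsHermitian
  ext i j
  simp only [Matrix.conjTranspose_apply, distSignlessLaplacian, starRingEnd_apply, star_trivial]
  rw [SimpleGraph.dist_comm]
  congr 1
  by_cases h : i = j
  · subst h; simp
  · rw [if_neg h, if_neg (Ne.symm h)]

lemma aux_rhoQ_dot_ge [Nonempty n] (G : SimpleGraph n) (y : n → ℝ) :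
    y ⬝ᵥ ((distSignlessLaplacian G) *ᵥ y) ≤ rhoQ G * (y ⬝ᵥ y) := by
  have hA := aux_dsl_herm (n := n) G
  set A := distSignlessLaplacian G with hAdef
  set M := ⨆ i, hA.eigenvalues i with hM
  set S := {μ : ℝ | ∃ x : n → ℝ, x ≠ 0 ∧ A.mulVec x = μ • x} with hS
  obtain ⟨i₀, hi₀⟩ := exists_eq_ciSup_of_finite (f := hA.eigenvalues)
  have hMS : M ∈ S := by
    refine ⟨(hA.eigenvectorBasis i₀ : n → ℝ), aux_eigen_basis_ne_zero hA i₀, ?_⟩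
    rw [hM, ← hi₀]
    exact hA.mulVec_eigenvectorBasis i₀
  have hbdd : BddAbove S := by
    refine ⟨M, fun μ hμ => ?_⟩
    obtain ⟨z, hz, hzA⟩ := hμ
    have h1 : z ⬝ᵥ (A *ᵥ z) ≤ M * (z ⬝ᵥ z) := aux_rayleigh_bound hA z
    rw [hzA] at h1
    have h2 : z ⬝ᵥ (μ • z) = μ * (z ⬝ᵥ z) := by
      simp [dotProduct_smul, smul_eq_mul]
    rw [h2] at h1
    exact le_of_mul_le_mul_right (by linarith [aux_dot_self_pos hz]) (aux_dot_self_pos hz)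
  have hle : M ≤ rhoQ G := le_csSup hbdd hMS
  calc y ⬝ᵥ (A *ᵥ y) ≤ M * (y ⬝ᵥ y) := aux_rayleigh_bound hA y
    _ ≤ rhoQ G * (y ⬝ᵥ y) := by
        rcases eq_or_ne y 0 with rfl | hy
        · simp
        · exact mul_le_mul_of_nonneg_right hle (le_of_lt (aux_dot_self_pos hy))

end Spectral

section Walks

variable {V : Type} [Fintype V] [DecidableEq V] {H : SimpleGraph V}

lemma aux_walk_pass {A : V → Prop} {c : V}
    (hA : ∀ a b, H.Adj a b → A a → A b ∨ b = c) :
    ∀ {s t : V} (p : H.Walk s t), A s → ¬ A t → c ∈ p.support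
  | s, _, SimpleGraph.Walk.nil, hs, ht => absurd hs ht
  | s, t, SimpleGraph.Walk.cons h q, hs, ht => by
      rcases hA _ _ h hs with hy | rfl
      · exact List.mem_cons_of_mem _ (aux_walk_pass hA q hy ht)
      · exact List.mem_cons_of_mem _ q.start_mem_support

lemma aux_walk_stay {A : V → Prop} {c : V}
    (hA : ∀ a b, H.Adj a b → A a → A b ∨ b = c) :
    ∀ {s t : V} (p : H.Walk s t), A s → c ∉ p.support → ∀ z ∈ p.support, A z
  | s, _, SimpleGraph.Walk.nil, hs, _, z, hz => by
      rw [SimpleGraph.Walk.support_nil, List.mem_singleton] at hz; rwa [hz]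
  | s, t, SimpleGraph.Walk.cons h q, hs, hc, z, hz => by
      rw [SimpleGraph.Walk.support_cons, List.mem_cons] at hc hz
      push_neg at hc
      rcases hA _ _ h hs with hy | rfl
      · rcases hz with rfl | hz
        · exact hs
        · exact aux_walk_stay hA q hy hc.2 z hz
      · exact absurd q.start_mem_support hc.2

lemma aux_walk_avoid {A : V → Prop} {c : V}
    (hA : ∀ a b, H.Adj a b → A a → A b ∨ b = c) :
    ∀ (N : ℕ) {s t : V} (p : H.Walk s t), p.length ≤ N → ¬ A s → ¬ A t →
      ∃ q : H.Walk s t, q.length ≤ p.length ∧ ∀ z ∈ q.support, ¬ A z := by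
  intro N
  induction N with
  | zero =>
    intro s t p hp hs ht
    cases p with
    | nil => exact ⟨SimpleGraph.Walk.nil, le_rfl, by simp [ht]⟩
    | cons h q => simp [SimpleGraph.Walk.length_cons] at hp
  | succ N ih =>
    intro s t p hp hs ht
    cases p with
    | nil => exact ⟨SimpleGraph.Walk.nil, le_rfl, by simp [ht]⟩
    | cons h q =>
      rename_i y
      rw [SimpleGraph.Walk.length_cons] at hp ⊢
      have hq : q.length ≤ N := Nat.lt_succ_iff.mp hp
      by_cases hy : A y
      · have hsc : s = c := by
          rcases hA _ _ h.symm hy with h' | h'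
          · exact absurd h' hs
          · exact h'
        have hcq : c ∈ q.support := aux_walk_pass hA q hy ht
        subst hsc
        obtain ⟨q', hq', hav⟩ := ih (q.dropUntil _ hcq)
          (le_trans (SimpleGraph.Walk.length_dropUntil_le q hcq) hq) hs ht
        exact ⟨q', le_trans hq' (le_trans (SimpleGraph.Walk.length_dropUntil_le q hcq)
          (Nat.le_succ_of_le le_rfl)), hav⟩
      · obtain ⟨q', hq', hav⟩ := ih q hq hy ht
        refine ⟨SimpleGraph.Walk.cons h q', by simpa using Nat.succ_le_succ hq', ?_⟩
        intro z hz
        rw [SimpleGraph.Walk.support_cons, List.mem_cons] at hz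
        rcases hz with rfl | hz
        · exact hs
        · exact hav z hz

lemma aux_dist_split {s t c : V} (p : H.Walk s t) (hc : c ∈ p.support) :
    H.dist s c + H.dist c t ≤ p.length := by
  have hspec := p.take_spec hc
  calc H.dist s c + H.dist c t
      ≤ (p.takeUntil c hc).length + (p.dropUntil c hc).length :=
        Nat.add_le_add (SimpleGraph.dist_le _) (SimpleGraph.dist_le _)
    _ = p.length := by rw [← SimpleGraph.Walk.length_append, hspec]

lemma aux_walk_map {H' : SimpleGraph V} :
    ∀ {s t : V} (p : H.Walk s t),
      (∀ a b, H.Adj a b → a ∈ p.support → b ∈ p.support → H'.Adj a b) →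
      ∃ q : H'.Walk s t, q.length = p.length
  | _, _, SimpleGraph.Walk.nil, _ => ⟨SimpleGraph.Walk.nil, rfl⟩
  | s, t, SimpleGraph.Walk.cons h p', hE => by
      obtain ⟨q, hq⟩ := aux_walk_map p' (fun a b hab ha hb =>
        hE a b hab (by rw [SimpleGraph.Walk.support_cons]; exact List.mem_cons_of_mem _ ha)
          (by rw [SimpleGraph.Walk.support_cons]; exact List.mem_cons_of_mem _ hb))
      refine ⟨SimpleGraph.Walk.cons (hE _ _ h (SimpleGraph.Walk.start_mem_support _) ?mem) q, ?_⟩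
      case mem =>
        rw [SimpleGraph.Walk.support_cons]
        exact List.mem_cons_of_mem _ p'.start_mem_support
      rw [SimpleGraph.Walk.length_cons, SimpleGraph.Walk.length_cons, hq]

/-- Transform a `Gt`-walk ending at `u` and starting in `A` into a `G`-walk to `v₀`. -/
lemma aux_walk_to_base {G Gt : SimpleGraph V} {A : V → Prop} {u v₀ : V} (hnAu : ¬ A u)
    (hadj_u : ∀ i, A i → Gt.Adj i u → G.Adj i v₀)
    (hadj_in : ∀ i y, A i → Gt.Adj i y → y ≠ u → A y ∧ G.Adj i y) :
    ∀ (N : ℕ) {i : V} (p : Gt.Walk i u), p.length ≤ N → A i →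
      ∃ q : G.Walk i v₀, q.length ≤ p.length := by
  intro N
  induction N with
  | zero =>
    intro i p hp hi
    cases p with
    | nil => exact absurd hi hnAu
    | cons h q => simp [SimpleGraph.Walk.length_cons] at hp
  | succ N ih =>
    intro i p hp hi
    cases p with
    | nil => exact absurd hi hnAu
    | cons h q =>
      rename_i y
      rw [SimpleGraph.Walk.length_cons] at hp ⊢
      have hq : q.length ≤ N := Nat.lt_succ_iff.mp hp
      by_cases hy : y = u
      · subst hy
        exact ⟨SimpleGraph.Walk.cons (hadj_u i hi h) SimpleGraph.Walk.nil,
          Nat.succ_le_succ (Nat.zero_le _)⟩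
      · obtain ⟨hAy, hGiy⟩ := hadj_in i y hi h hy
        obtain ⟨q', hq'⟩ := ih q hq hAy
        exact ⟨SimpleGraph.Walk.cons hGiy q', Nat.succ_le_succ hq'⟩

end Walks

section Quad2
variable {V : Type} [Fintype V] [DecidableEq V]

lemma aux_dsl_apply (H : SimpleGraph V) (a b : V) :
    distSignlessLaplacian H a b = (if a = b then transmission H a else 0) + (H.dist a b : ℝ) := by
  by_cases h : a = b <;> simp [distSignlessLaplacian, h]

lemma aux_quad_form (H : SimpleGraph V) (x : V → ℝ) :
    x ⬝ᵥ ((distSignlessLaplacian H) *ᵥ x) =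
      ∑ a : V, ∑ b : V, (H.dist a b : ℝ) * (x a ^ 2 + x a * x b) := by
  have hrow : ∀ a, ((distSignlessLaplacian H) *ᵥ x) a
      = transmission H a * x a + ∑ b : V, (H.dist a b : ℝ) * x b := by
    intro a
    show (fun b => distSignlessLaplacian H a b) ⬝ᵥ x = _
    unfold dotProduct
    simp only [aux_dsl_apply, add_mul, Finset.sum_add_distrib, ite_mul, zero_mul]
    rw [Finset.sum_ite_eq]
    simp
  unfold dotProduct
  rw [Finset.sum_congr rfl (fun a _ => by rw [hrow a])]
  refine Finset.sum_congr rfl fun a _ => ?_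
  rw [transmission, mul_add, Finset.sum_mul, Finset.mul_sum, Finset.mul_sum,
    ← Finset.sum_add_distrib]
  refine Finset.sum_congr rfl fun b _ => ?_
  ring

lemma aux_sym_double (f : V → V → ℝ) (hsym : ∀ a b, f a b = f b a) (x : V → ℝ) :
    2 * (∑ a : V, ∑ b : V, f a b * (x a ^ 2 + x a * x b))
      = ∑ a : V, ∑ b : V, f a b * (x a + x b) ^ 2 := by
  have hswap : (∑ a : V, ∑ b : V, f a b * (x a ^ 2 + x a * x b))
      = ∑ a : V, ∑ b : V, f a b * (x b ^ 2 + x a * x b) := by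
    rw [Finset.sum_comm]
    exact Finset.sum_congr rfl fun a _ => Finset.sum_congr rfl fun b _ => by
      rw [hsym b a]; ring
  rw [two_mul]
  nth_rewrite 2 [hswap]
  rw [← Finset.sum_add_distrib]
  refine Finset.sum_congr rfl fun a _ => ?_
  rw [← Finset.sum_add_distrib]
  refine Finset.sum_congr rfl fun b _ => ?_
  ring

end Quad2

/-- Lemma 3.1: with the same decomposition `G = G₁ ∪ G₂ ∪ G₃` as in Lemma 2.1, `u ∈ S₂ \ {v₀}`,
`G̃` obtained from `G` by moving `G₃` from `v₀` to `u`, and `x` a Perron (positive) eigenvector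
of `Q_D(G)` for `ρ_Q(G)`: if
`∑_{i ∈ S₃\{v₀}} ∑_{j ∈ S₁} (xᵢ + xⱼ)² ≥ ∑_{i ∈ S₃\{v₀}} ∑_{j ∈ S₂} (xᵢ + xⱼ)²`
then `ρ_Q(G̃) > ρ_Q(G)`. -/
theorem rhoQ_graft_transformation {V : Type} [Fintype V] [DecidableEq V]
    (G Gt : SimpleGraph V) (hG : G.Connected)
    (S₁ S₂ S₃ : Finset V) (v₀ u : V)
    (hcover : S₁ ∪ S₂ ∪ S₃ = Finset.univ)
    (h12 : S₁ ∩ S₂ = {v₀}) (h13 : S₁ ∩ S₃ = {v₀}) (h23 : S₂ ∩ S₃ = {v₀})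
    (hc1 : 2 ≤ S₁.card) (hc2 : 2 ≤ S₂.card) (hc3 : 2 ≤ S₃.card)
    (hconn1 : (SimpleGraph.induce (↑S₁ : Set V) G).Connected)
    (hconn2 : (SimpleGraph.induce (↑S₂ : Set V) G).Connected)
    (hconn3 : (SimpleGraph.induce (↑S₃ : Set V) G).Connected)
    (hedges : ∀ a b : V, G.Adj a b →
      (a ∈ S₁ ∧ b ∈ S₁) ∨ (a ∈ S₂ ∧ b ∈ S₂) ∨ (a ∈ S₃ ∧ b ∈ S₃))
    (hu : u ∈ S₂) (huv₀ : u ≠ v₀)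
    (hGt : ∀ a b : V, Gt.Adj a b ↔
      ((G.Adj a b ∧ ¬(a = v₀ ∧ b ∈ S₃ ∧ G.Adj v₀ b) ∧ ¬(b = v₀ ∧ a ∈ S₃ ∧ G.Adj v₀ a)) ∨
        (a = u ∧ b ∈ S₃ ∧ G.Adj v₀ b) ∨ (b = u ∧ a ∈ S₃ ∧ G.Adj v₀ a)))
    (x : V → ℝ) (hpos : ∀ v : V, 0 < x v)
    (heig : (distSignlessLaplacian G).mulVec x = rhoQ G • x)
    (hineq : ∑ i ∈ S₃.erase v₀, ∑ j ∈ S₁, (x i + x j) ^ 2 ≥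
      ∑ i ∈ S₃.erase v₀, ∑ j ∈ S₂, (x i + x j) ^ 2) :
    rhoQ Gt > rhoQ G := by
  classical
  haveI : Nonempty V := ⟨v₀⟩
  -- basic membership facts
  have hmem12 : ∀ z, z ∈ S₁ → z ∈ S₂ → z = v₀ := fun z h1 h2 => by
    have : z ∈ S₁ ∩ S₂ := Finset.mem_inter.mpr ⟨h1, h2⟩
    rwa [h12, Finset.mem_singleton] at this
  have hmem13 : ∀ z, z ∈ S₁ → z ∈ S₃ → z = v₀ := fun z h1 h2 => by
    have : z ∈ S₁ ∩ S₃ := Finset.mem_inter.mpr ⟨h1, h2⟩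
    rwa [h13, Finset.mem_singleton] at this
  have hmem23 : ∀ z, z ∈ S₂ → z ∈ S₃ → z = v₀ := fun z h1 h2 => by
    have : z ∈ S₂ ∩ S₃ := Finset.mem_inter.mpr ⟨h1, h2⟩
    rwa [h23, Finset.mem_singleton] at this
  have hv₀1 : v₀ ∈ S₁ := by
    have : v₀ ∈ S₁ ∩ S₂ := by rw [h12]; exact Finset.mem_singleton_self v₀
    exact (Finset.mem_inter.mp this).1
  have hv₀2 : v₀ ∈ S₂ := by
    have : v₀ ∈ S₁ ∩ S₂ := by rw [h12]; exact Finset.mem_singleton_self v₀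
    exact (Finset.mem_inter.mp this).2
  have hv₀3 : v₀ ∈ S₃ := by
    have : v₀ ∈ S₁ ∩ S₃ := by rw [h13]; exact Finset.mem_singleton_self v₀
    exact (Finset.mem_inter.mp this).2
  have hu3 : u ∉ S₃ := fun h => huv₀ (hmem23 u hu h)
  have hu1 : u ∉ S₁ := fun h => huv₀ (hmem12 u h hu)
  have hA_nS1 : ∀ z, (z ∈ S₃ ∧ z ≠ v₀) → z ∉ S₁ := fun z hz h => hz.2 (hmem13 z h hz.1)
  have hA_nS2 : ∀ z, (z ∈ S₃ ∧ z ≠ v₀) → z ∉ S₂ := fun z hz h => hz.2 (hmem23 z h hz.1)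
  have hnAu : ¬ (u ∈ S₃ ∧ u ≠ v₀) := fun h => hu3 h.1
  -- edge structure lemmas in G
  have hG3 : ∀ a b, G.Adj a b → (a ∈ S₃ ∧ a ≠ v₀) → b ∈ S₃ := by
    intro a b hab ha
    rcases hedges a b hab with ⟨h1, _⟩ | ⟨h2, _⟩ | ⟨_, h3⟩
    · exact absurd h1 (hA_nS1 a ha)
    · exact absurd h2 (hA_nS2 a ha)
    · exact h3
  have hGA : ∀ a b, G.Adj a b → (a ∈ S₃ ∧ a ≠ v₀) → (b ∈ S₃ ∧ b ≠ v₀) ∨ b = v₀ := by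
    intro a b hab ha
    by_cases hb : b = v₀
    · exact Or.inr hb
    · exact Or.inl ⟨hG3 a b hab ha, hb⟩
  have hG2edge : ∀ a b, G.Adj a b → (a ∈ S₂ ∧ a ≠ v₀) → (b ∈ S₂ ∧ b ≠ v₀) ∨ b = v₀ := by
    intro a b hab ha
    obtain ⟨ha2, hav⟩ := ha
    have hb2 : b ∈ S₂ := by
      rcases hedges a b hab with ⟨h1, _⟩ | ⟨_, h2⟩ | ⟨h3, _⟩
      · exact absurd (hmem12 a h1 ha2) hav
      · exact h2
      · exact absurd (hmem23 a ha2 h3) hav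
    by_cases hb : b = v₀
    · exact Or.inr hb
    · exact Or.inl ⟨hb2, hb⟩
  -- edge structure lemmas in Gt
  have hGtA : ∀ a b, Gt.Adj a b → (a ∈ S₃ ∧ a ≠ v₀) → (b ∈ S₃ ∧ b ≠ v₀) ∨ b = u := by
    intro a b hab ha
    rcases (hGt a b).mp hab with ⟨hGab, _, hn2⟩ | ⟨hau, _, _⟩ | ⟨hbu, _, _⟩
    · have hb3 : b ∈ S₃ := hG3 a b hGab ha
      by_cases hb : b = v₀
      · exact absurd ⟨hb, ha.1, (hb ▸ hGab).symm⟩ hn2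
      · exact Or.inl ⟨hb3, hb⟩
    · exact absurd (hau ▸ ha) hnAu
    · exact Or.inr hbu
  have hGt_in : ∀ a b, Gt.Adj a b → (a ∈ S₃ ∧ a ≠ v₀) → (b ∈ S₃ ∧ b ≠ v₀) → G.Adj a b := by
    intro a b hab ha hb
    rcases (hGt a b).mp hab with ⟨hGab, _, _⟩ | ⟨hau, _, _⟩ | ⟨hbu, _, _⟩
    · exact hGab
    · exact absurd (hau ▸ ha) hnAu
    · exact absurd (hbu ▸ hb) hnAu
  have hGt_out : ∀ a b, Gt.Adj a b → ¬ (a ∈ S₃ ∧ a ≠ v₀) → ¬ (b ∈ S₃ ∧ b ≠ v₀) →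
      G.Adj a b := by
    intro a b hab ha hb
    rcases (hGt a b).mp hab with ⟨hGab, _, _⟩ | ⟨hau, hb3, hv⟩ | ⟨hbu, ha3, hv⟩
    · exact hGab
    · have hb0 : b = v₀ := by_contra fun h => hb ⟨hb3, h⟩
      exact absurd (hb0 ▸ hv) (G.loopless.irrefl v₀)
    · have ha0 : a = v₀ := by_contra fun h => ha ⟨ha3, h⟩
      exact absurd (ha0 ▸ hv) (G.loopless.irrefl v₀)
  have hG_keep : ∀ a b, G.Adj a b → ¬ (a ∈ S₃ ∧ a ≠ v₀) → ¬ (b ∈ S₃ ∧ b ≠ v₀) →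
      Gt.Adj a b := by
    intro a b hab ha hb
    refine (hGt a b).mpr (Or.inl ⟨hab, ?_, ?_⟩)
    · rintro ⟨-, hb3, hvb⟩
      exact hb ⟨hb3, fun h => G.loopless.irrefl v₀ (h ▸ hvb)⟩
    · rintro ⟨-, ha3, hva⟩
      exact ha ⟨ha3, fun h => G.loopless.irrefl v₀ (h ▸ hva)⟩
  have hadj_u : ∀ i, (i ∈ S₃ ∧ i ≠ v₀) → Gt.Adj i u → G.Adj i v₀ := by
    intro i hi h
    rcases (hGt i u).mp h with ⟨hGiu, _, _⟩ | ⟨hiu, _, _⟩ | ⟨_, _, hv⟩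
    · exact absurd (hG3 i u hGiu hi) hu3
    · exact absurd (hiu ▸ hi) hnAu
    · exact hv.symm
  have hadj_in : ∀ i y, (i ∈ S₃ ∧ i ≠ v₀) → Gt.Adj i y → y ≠ u →
      (y ∈ S₃ ∧ y ≠ v₀) ∧ G.Adj i y := by
    intro i y hi h hy
    rcases hGtA i y h hi with hAy | h'
    · exact ⟨hAy, hGt_in i y h hi hAy⟩
    · exact absurd h' hy
  -- reachability in Gt
  have reach_u : ∀ z : V, Gt.Reachable z u := by
    have reach_out : ∀ z, ¬ (z ∈ S₃ ∧ z ≠ v₀) → Gt.Reachable z u := by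
      intro z hz
      obtain ⟨p⟩ := hG.preconnected z u
      obtain ⟨q, _, hav⟩ := aux_walk_avoid hGA p.length p le_rfl hz hnAu
      obtain ⟨r, _⟩ := aux_walk_map q (fun a b hab ha hb =>
        hG_keep a b hab (hav a ha) (hav b hb))
      exact ⟨r⟩
    have main : ∀ (N : ℕ) (w' : V) (p : G.Walk w' v₀), p.length ≤ N →
        (∀ z ∈ p.support, z ∈ S₃) → w' ≠ v₀ → Gt.Reachable w' u := by
      intro N
      induction N with
      | zero =>
        intro w' p hp hs hne
        cases p with
        | nil => exact absurd rfl hne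
        | cons h q => simp [SimpleGraph.Walk.length_cons] at hp
      | succ N ih =>
        intro w' p hp hs hne
        cases p with
        | nil => exact absurd rfl hne
        | cons h q =>
          rename_i y
          rw [SimpleGraph.Walk.length_cons] at hp
          have hw3 : w' ∈ S₃ := hs w' (SimpleGraph.Walk.start_mem_support _)
          have hy3 : y ∈ S₃ := by
            apply hs
            rw [SimpleGraph.Walk.support_cons]
            exact List.mem_cons_of_mem _ q.start_mem_support
          by_cases hyv : y = v₀
          · subst hyv
            exact SimpleGraph.Adj.reachable
              ((hGt w' u).mpr (Or.inr (Or.inr ⟨rfl, hw3, h.symm⟩)))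
          · have hGt_wy : Gt.Adj w' y := (hGt w' y).mpr (Or.inl ⟨h,
              by rintro ⟨h0, _, _⟩; exact hne h0,
              by rintro ⟨h0, _, _⟩; exact hyv h0⟩)
            have hrest : Gt.Reachable y u := ih y q (Nat.lt_succ_iff.mp hp)
              (fun z hz => hs z (by
                rw [SimpleGraph.Walk.support_cons]
                exact List.mem_cons_of_mem _ hz)) hyv
            exact hGt_wy.reachable.trans hrest
    intro z
    by_cases hz : z ∈ S₃ ∧ z ≠ v₀
    · obtain ⟨p₀⟩ := hconn3.preconnected ⟨z, Finset.mem_coe.mpr hz.1⟩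
        ⟨v₀, Finset.mem_coe.mpr hv₀3⟩
      let p : G.Walk z v₀ := p₀.map (SimpleGraph.Embedding.induce (↑S₃ : Set V)).toHom
      have hsupp : ∀ w ∈ p.support, w ∈ S₃ := by
        intro w hw'
        rw [show p.support = _ from SimpleGraph.Walk.support_map _ _, List.mem_map] at hw'
        obtain ⟨w', _, rfl⟩ := hw'
        exact Finset.mem_coe.mp w'.2
      exact main p.length z p le_rfl hsupp hz.2
    · exact reach_out z hz
  have hGtReach : ∀ a b : V, Gt.Reachable a b :=
    fun a b => (reach_u a).trans (reach_u b).symm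
  -- natural-number distance comparisons
  have F2 : ∀ i, (i ∈ S₃ ∧ i ≠ v₀) → ∀ (p : Gt.Walk i u),
      ∃ q : G.Walk i v₀, q.length ≤ p.length :=
    fun i hi p => aux_walk_to_base (A := fun z => z ∈ S₃ ∧ z ≠ v₀) hnAu hadj_u hadj_in p.length p le_rfl hi
  have N1 : ∀ i i', (i ∈ S₃ ∧ i ≠ v₀) → (i' ∈ S₃ ∧ i' ≠ v₀) →
      G.dist i i' ≤ Gt.dist i i' := by
    intro i i' hi hi'
    obtain ⟨p, hp⟩ := (hGtReach i i').exists_walk_length_eq_dist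
    by_cases hus : u ∈ p.support
    · obtain ⟨q₁, hq₁⟩ := F2 i hi (p.takeUntil u hus)
      obtain ⟨q₂, hq₂⟩ := F2 i' hi' ((p.dropUntil u hus).reverse)
      have htri : G.dist i i' ≤ G.dist i v₀ + G.dist v₀ i' := hG.dist_triangle
      have h1 : G.dist i v₀ ≤ (p.takeUntil u hus).length :=
        le_trans (SimpleGraph.dist_le q₁) hq₁
      have h2 : G.dist v₀ i' ≤ (p.dropUntil u hus).length := by
        rw [SimpleGraph.dist_comm]
        refine le_trans (le_trans (SimpleGraph.dist_le q₂) hq₂) ?_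
        rw [SimpleGraph.Walk.length_reverse]
      have hlen : (p.takeUntil u hus).length + (p.dropUntil u hus).length = p.length := by
        rw [← SimpleGraph.Walk.length_append, p.take_spec hus]
      omega
    · have hstay := aux_walk_stay hGtA p hi hus
      obtain ⟨q, hq⟩ := aux_walk_map p (fun a b hab ha hb =>
        hGt_in a b hab (hstay a ha) (hstay b hb))
      calc G.dist i i' ≤ q.length := SimpleGraph.dist_le q
        _ = p.length := hq
        _ = Gt.dist i i' := hp
  have N2 : ∀ z z', ¬ (z ∈ S₃ ∧ z ≠ v₀) → ¬ (z' ∈ S₃ ∧ z' ≠ v₀) →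
      G.dist z z' ≤ Gt.dist z z' := by
    intro z z' hz hz'
    obtain ⟨p, hp⟩ := (hGtReach z z').exists_walk_length_eq_dist
    obtain ⟨q, hql, hav⟩ := aux_walk_avoid hGtA p.length p le_rfl hz hz'
    obtain ⟨r, hr⟩ := aux_walk_map q (fun a b hab ha hb =>
      hGt_out a b hab (hav a ha) (hav b hb))
    calc G.dist z z' ≤ r.length := SimpleGraph.dist_le r
      _ = q.length := hr
      _ ≤ p.length := hql
      _ = Gt.dist z z' := hp
  have N3 : ∀ i b, (i ∈ S₃ ∧ i ≠ v₀) → ¬ (b ∈ S₃ ∧ b ≠ v₀) →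
      G.dist i v₀ + G.dist u b ≤ Gt.dist i b := by
    intro i b hi hb
    obtain ⟨p, hp⟩ := (hGtReach i b).exists_walk_length_eq_dist
    have hus : u ∈ p.support := aux_walk_pass hGtA p hi hb
    obtain ⟨q₁, hq₁⟩ := F2 i hi (p.takeUntil u hus)
    have h1 : G.dist i v₀ ≤ (p.takeUntil u hus).length :=
      le_trans (SimpleGraph.dist_le q₁) hq₁
    obtain ⟨q₂, hql₂, hav₂⟩ := aux_walk_avoid hGtA (p.dropUntil u hus).length
      (p.dropUntil u hus) le_rfl hnAu hb
    obtain ⟨r₂, hr₂⟩ := aux_walk_map q₂ (fun a b' hab ha hb' =>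
      hGt_out a b' hab (hav₂ a ha) (hav₂ b' hb'))
    have h2 : G.dist u b ≤ (p.dropUntil u hus).length := by
      calc G.dist u b ≤ r₂.length := SimpleGraph.dist_le r₂
        _ = q₂.length := hr₂
        _ ≤ _ := hql₂
    have hlen : (p.takeUntil u hus).length + (p.dropUntil u hus).length = p.length := by
      rw [← SimpleGraph.Walk.length_append, p.take_spec hus]
    omega
  have NG : ∀ b ∈ S₁, G.dist u v₀ + G.dist v₀ b ≤ G.dist u b := by
    intro b hb1
    obtain ⟨p, hp⟩ := (hG.preconnected u b).exists_walk_length_eq_dist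
    have hpass : v₀ ∈ p.support := aux_walk_pass hG2edge p ⟨hu, huv₀⟩
      (fun hb => hb.2 (hmem12 b hb1 hb.1))
    have := aux_dist_split p hpass
    omega
  -- real per-pair bounds
  have P3 : ∀ a b, (a ∈ S₃ ∧ a ≠ v₀) → b ∈ S₁ →
      (G.dist a b : ℝ) + (G.dist v₀ u : ℝ) ≤ (Gt.dist a b : ℝ) := by
    intro a b ha hb
    have hnb : ¬ (b ∈ S₃ ∧ b ≠ v₀) := fun h => hA_nS1 b h hb
    have h3 := N3 a b ha hnb
    have hng := NG b hb
    have hduvc : G.dist u v₀ = G.dist v₀ u := SimpleGraph.dist_comm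
    have htri : G.dist a b ≤ G.dist a v₀ + G.dist v₀ b := hG.dist_triangle
    have hfin : G.dist a b + G.dist v₀ u ≤ Gt.dist a b := by omega
    exact_mod_cast hfin
  have P4 : ∀ a b, (a ∈ S₃ ∧ a ≠ v₀) → ¬ (b ∈ S₃ ∧ b ≠ v₀) →
      (G.dist a b : ℝ) ≤ (Gt.dist a b : ℝ) + (G.dist v₀ u : ℝ) := by
    intro a b ha hb
    have h3 := N3 a b ha hb
    have htri1 : G.dist a b ≤ G.dist a v₀ + G.dist v₀ b := hG.dist_triangle
    have htri2 : G.dist v₀ b ≤ G.dist v₀ u + G.dist u b := hG.dist_triangle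
    have hfin : G.dist a b ≤ Gt.dist a b + G.dist v₀ u := by omega
    exact_mod_cast hfin
  -- Finset bookkeeping
  have hAFmem : ∀ z, z ∈ S₃.erase v₀ ↔ (z ∈ S₃ ∧ z ≠ v₀) := by
    intro z
    rw [Finset.mem_erase]
    exact ⟨fun h => ⟨h.2, h.1⟩, fun h => ⟨h.2, h.1⟩⟩
  have hcompl : (S₃.erase v₀)ᶜ = S₁ ∪ S₂.erase v₀ := by
    ext z
    simp only [Finset.mem_compl, Finset.mem_union, Finset.mem_erase]
    constructor
    · intro hz
      have hnz : ¬ (z ∈ S₃ ∧ z ≠ v₀) := fun h => hz ⟨h.2, h.1⟩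
      by_cases h3 : z ∈ S₃
      · have hzv : z = v₀ := by_contra fun h => hnz ⟨h3, h⟩
        exact Or.inl (hzv ▸ hv₀1)
      · have hcv : z ∈ S₁ ∪ S₂ ∪ S₃ := hcover ▸ Finset.mem_univ z
        rcases Finset.mem_union.mp hcv with h | h
        · rcases Finset.mem_union.mp h with h | h
          · exact Or.inl h
          · by_cases hzv : z = v₀
            · exact Or.inl (hzv ▸ hv₀1)
            · exact Or.inr ⟨hzv, h⟩
        · exact absurd h h3
    · intro hz hmem
      rcases hz with h | ⟨_, h2⟩
      · exact hA_nS1 z ⟨hmem.2, hmem.1⟩ h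
      · exact hA_nS2 z ⟨hmem.2, hmem.1⟩ h2
  have hdisj : Disjoint S₁ (S₂.erase v₀) := by
    rw [Finset.disjoint_left]
    intro z h1 h2
    rw [Finset.mem_erase] at h2
    exact h2.1 (hmem12 z h1 h2.2)
  have hAFne : (S₃.erase v₀).Nonempty := by
    rw [← Finset.card_pos, Finset.card_erase_of_mem hv₀3]
    omega
  -- positivity setup
  have hwpos : ∀ a b : V, (0 : ℝ) < (x a + x b) ^ 2 :=
    fun a b => pow_pos (by linarith [hpos a, hpos b]) 2
  have hduv_pos : (0 : ℝ) < (G.dist v₀ u : ℝ) := by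
    have h0 : 0 < G.dist v₀ u := hG.pos_dist_of_ne (Ne.symm huv₀)
    exact_mod_cast h0
  -- block bounds for the double sum
  have hT1 : 0 ≤ ∑ a ∈ S₃.erase v₀, ∑ b ∈ S₃.erase v₀,
      ((Gt.dist a b : ℝ) - (G.dist a b : ℝ)) * (x a + x b) ^ 2 := by
    refine Finset.sum_nonneg fun a ha => Finset.sum_nonneg fun b hb => ?_
    have hle : (G.dist a b : ℝ) ≤ (Gt.dist a b : ℝ) := by
      exact_mod_cast N1 a b ((hAFmem a).mp ha) ((hAFmem b).mp hb)
    exact mul_nonneg (by linarith) (le_of_lt (hwpos a b))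
  have hT4 : 0 ≤ ∑ a ∈ (S₃.erase v₀)ᶜ, ∑ b ∈ (S₃.erase v₀)ᶜ,
      ((Gt.dist a b : ℝ) - (G.dist a b : ℝ)) * (x a + x b) ^ 2 := by
    refine Finset.sum_nonneg fun a ha => Finset.sum_nonneg fun b hb => ?_
    rw [Finset.mem_compl] at ha hb
    have hle : (G.dist a b : ℝ) ≤ (Gt.dist a b : ℝ) := by
      exact_mod_cast N2 a b (fun h => ha ((hAFmem a).mpr h)) (fun h => hb ((hAFmem b).mpr h))
    exact mul_nonneg (by linarith) (le_of_lt (hwpos a b))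
  have hW0 : 0 < ∑ a ∈ S₃.erase v₀, (x a + x v₀) ^ 2 :=
    Finset.sum_pos (fun a _ => hwpos a v₀) hAFne
  have hT2 : (G.dist v₀ u : ℝ) * (∑ a ∈ S₃.erase v₀, (x a + x v₀) ^ 2) ≤
      ∑ a ∈ S₃.erase v₀, ∑ b ∈ (S₃.erase v₀)ᶜ,
        ((Gt.dist a b : ℝ) - (G.dist a b : ℝ)) * (x a + x b) ^ 2 := by
    have hper : ∀ a ∈ S₃.erase v₀,
        (G.dist v₀ u : ℝ) * ((∑ b ∈ S₁, (x a + x b) ^ 2) - ∑ b ∈ S₂.erase v₀, (x a + x b) ^ 2)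
          ≤ ∑ b ∈ (S₃.erase v₀)ᶜ, ((Gt.dist a b : ℝ) - (G.dist a b : ℝ)) * (x a + x b) ^ 2 := by
      intro a ha
      have hAa := (hAFmem a).mp ha
      rw [hcompl, Finset.sum_union hdisj]
      have hb1 : ∀ b ∈ S₁, (G.dist v₀ u : ℝ) * (x a + x b) ^ 2 ≤
          ((Gt.dist a b : ℝ) - (G.dist a b : ℝ)) * (x a + x b) ^ 2 := by
        intro b hb
        have := P3 a b hAa hb
        exact mul_le_mul_of_nonneg_right (by linarith) (le_of_lt (hwpos a b))
      have hb2 : ∀ b ∈ S₂.erase v₀, -((G.dist v₀ u : ℝ) * (x a + x b) ^ 2) ≤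
          ((Gt.dist a b : ℝ) - (G.dist a b : ℝ)) * (x a + x b) ^ 2 := by
        intro b hb
        rw [Finset.mem_erase] at hb
        have hnb : ¬ (b ∈ S₃ ∧ b ≠ v₀) := fun h => hA_nS2 b h hb.2
        have hP := P4 a b hAa hnb
        have hF : -(G.dist v₀ u : ℝ) ≤ (Gt.dist a b : ℝ) - (G.dist a b : ℝ) := by linarith
        calc -((G.dist v₀ u : ℝ) * (x a + x b) ^ 2)
            = (-(G.dist v₀ u : ℝ)) * (x a + x b) ^ 2 := by ring
          _ ≤ ((Gt.dist a b : ℝ) - (G.dist a b : ℝ)) * (x a + x b) ^ 2 :=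
              mul_le_mul_of_nonneg_right hF (le_of_lt (hwpos a b))
      calc (G.dist v₀ u : ℝ) *
            ((∑ b ∈ S₁, (x a + x b) ^ 2) - ∑ b ∈ S₂.erase v₀, (x a + x b) ^ 2)
          = (∑ b ∈ S₁, (G.dist v₀ u : ℝ) * (x a + x b) ^ 2)
            + ∑ b ∈ S₂.erase v₀, -((G.dist v₀ u : ℝ) * (x a + x b) ^ 2) := by
            rw [mul_sub, Finset.mul_sum, Finset.mul_sum, sub_eq_add_neg, ← Finset.sum_neg_distrib]
        _ ≤ (∑ b ∈ S₁, ((Gt.dist a b : ℝ) - (G.dist a b : ℝ)) * (x a + x b) ^ 2)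
            + ∑ b ∈ S₂.erase v₀, ((Gt.dist a b : ℝ) - (G.dist a b : ℝ)) * (x a + x b) ^ 2 :=
            add_le_add (Finset.sum_le_sum hb1) (Finset.sum_le_sum hb2)
    have hsum_per := Finset.sum_le_sum hper
    have hfact : ∑ a ∈ S₃.erase v₀, (G.dist v₀ u : ℝ) *
          ((∑ b ∈ S₁, (x a + x b) ^ 2) - ∑ b ∈ S₂.erase v₀, (x a + x b) ^ 2)
        = (G.dist v₀ u : ℝ) * ((∑ a ∈ S₃.erase v₀, ∑ b ∈ S₁, (x a + x b) ^ 2)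
            - ∑ a ∈ S₃.erase v₀, ∑ b ∈ S₂.erase v₀, (x a + x b) ^ 2) := by
      rw [← Finset.mul_sum, Finset.sum_sub_distrib]
    have herase : ∀ a : V, ∑ b ∈ S₂.erase v₀, (x a + x b) ^ 2
        = (∑ b ∈ S₂, (x a + x b) ^ 2) - (x a + x v₀) ^ 2 := by
      intro a
      rw [← Finset.sum_erase_add S₂ (fun b => (x a + x b) ^ 2) hv₀2]
      ring
    have hsum2 : ∑ a ∈ S₃.erase v₀, ∑ b ∈ S₂.erase v₀, (x a + x b) ^ 2
        = (∑ a ∈ S₃.erase v₀, ∑ b ∈ S₂, (x a + x b) ^ 2)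
          - ∑ a ∈ S₃.erase v₀, (x a + x v₀) ^ 2 := by
      rw [← Finset.sum_sub_distrib]
      exact Finset.sum_congr rfl fun a _ => herase a
    have hstep : (G.dist v₀ u : ℝ) * (∑ a ∈ S₃.erase v₀, (x a + x v₀) ^ 2)
        ≤ (G.dist v₀ u : ℝ) * ((∑ a ∈ S₃.erase v₀, ∑ b ∈ S₁, (x a + x b) ^ 2)
            - ∑ a ∈ S₃.erase v₀, ∑ b ∈ S₂.erase v₀, (x a + x b) ^ 2) := by
      apply mul_le_mul_of_nonneg_left _ (le_of_lt hduv_pos)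
      rw [hsum2]
      linarith [hineq]
    calc (G.dist v₀ u : ℝ) * (∑ a ∈ S₃.erase v₀, (x a + x v₀) ^ 2)
        ≤ _ := hstep
      _ = _ := hfact.symm
      _ ≤ _ := hsum_per
  have hT3 : ∑ a ∈ (S₃.erase v₀)ᶜ, ∑ b ∈ S₃.erase v₀,
        ((Gt.dist a b : ℝ) - (G.dist a b : ℝ)) * (x a + x b) ^ 2
      = ∑ a ∈ S₃.erase v₀, ∑ b ∈ (S₃.erase v₀)ᶜ,
        ((Gt.dist a b : ℝ) - (G.dist a b : ℝ)) * (x a + x b) ^ 2 := by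
    rw [Finset.sum_comm]
    exact Finset.sum_congr rfl fun a _ => Finset.sum_congr rfl fun b _ => by
      rw [SimpleGraph.dist_comm (G := G) (u := b) (v := a),
        SimpleGraph.dist_comm (G := Gt) (u := b) (v := a)]
      ring
  have htotal : 0 < ∑ a : V, ∑ b : V,
      ((Gt.dist a b : ℝ) - (G.dist a b : ℝ)) * (x a + x b) ^ 2 := by
    have hsplit : ∑ a : V, ∑ b : V,
        ((Gt.dist a b : ℝ) - (G.dist a b : ℝ)) * (x a + x b) ^ 2
        = ((∑ a ∈ S₃.erase v₀, ∑ b ∈ S₃.erase v₀,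
            ((Gt.dist a b : ℝ) - (G.dist a b : ℝ)) * (x a + x b) ^ 2)
          + ∑ a ∈ S₃.erase v₀, ∑ b ∈ (S₃.erase v₀)ᶜ,
            ((Gt.dist a b : ℝ) - (G.dist a b : ℝ)) * (x a + x b) ^ 2)
          + ((∑ a ∈ (S₃.erase v₀)ᶜ, ∑ b ∈ S₃.erase v₀,
            ((Gt.dist a b : ℝ) - (G.dist a b : ℝ)) * (x a + x b) ^ 2)
          + ∑ a ∈ (S₃.erase v₀)ᶜ, ∑ b ∈ (S₃.erase v₀)ᶜ,
            ((Gt.dist a b : ℝ) - (G.dist a b : ℝ)) * (x a + x b) ^ 2) := by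
      rw [← Finset.sum_add_sum_compl (S₃.erase v₀) (fun a => ∑ b : V,
        ((Gt.dist a b : ℝ) - (G.dist a b : ℝ)) * (x a + x b) ^ 2)]
      congr 1
      · rw [← Finset.sum_add_distrib]
        exact Finset.sum_congr rfl fun a _ => (Finset.sum_add_sum_compl (S₃.erase v₀) _).symm
      · rw [← Finset.sum_add_distrib]
        exact Finset.sum_congr rfl fun a _ => (Finset.sum_add_sum_compl (S₃.erase v₀) _).symm
    rw [hsplit]
    have hpos2 := mul_pos hduv_pos hW0
    linarith [hT1, hT2, hT3, hT4]
  -- from the double sum to the quadratic forms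
  have hsum_lt : ∑ a : V, ∑ b : V, (G.dist a b : ℝ) * (x a + x b) ^ 2
      < ∑ a : V, ∑ b : V, (Gt.dist a b : ℝ) * (x a + x b) ^ 2 := by
    have hdiff : ∑ a : V, ∑ b : V,
        ((Gt.dist a b : ℝ) - (G.dist a b : ℝ)) * (x a + x b) ^ 2
        = (∑ a : V, ∑ b : V, (Gt.dist a b : ℝ) * (x a + x b) ^ 2)
          - ∑ a : V, ∑ b : V, (G.dist a b : ℝ) * (x a + x b) ^ 2 := by
      rw [← Finset.sum_sub_distrib]
      refine Finset.sum_congr rfl fun a _ => ?_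
      rw [← Finset.sum_sub_distrib]
      exact Finset.sum_congr rfl fun b _ => by ring
    linarith [htotal, hdiff ▸ htotal]
  have sG := aux_sym_double (fun a b => (G.dist a b : ℝ))
    (fun a b => congrArg (fun n : ℕ => (n : ℝ)) (SimpleGraph.dist_comm (G := G))) x
  have sGt := aux_sym_double (fun a b => (Gt.dist a b : ℝ))
    (fun a b => congrArg (fun n : ℕ => (n : ℝ)) (SimpleGraph.dist_comm (G := Gt))) x
  have qG := aux_quad_form G x
  have qGt := aux_quad_form Gt x
  have hQ_lt : x ⬝ᵥ ((distSignlessLaplacian G) *ᵥ x)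
      < x ⬝ᵥ ((distSignlessLaplacian Gt) *ᵥ x) := by
    have h1 : 2 * (x ⬝ᵥ ((distSignlessLaplacian G) *ᵥ x))
        = ∑ a : V, ∑ b : V, (G.dist a b : ℝ) * (x a + x b) ^ 2 := by rw [qG]; exact sG
    have h2 : 2 * (x ⬝ᵥ ((distSignlessLaplacian Gt) *ᵥ x))
        = ∑ a : V, ∑ b : V, (Gt.dist a b : ℝ) * (x a + x b) ^ 2 := by rw [qGt]; exact sGt
    linarith [hsum_lt]
  -- conclude via Rayleigh quotients
  have hxne : x ≠ 0 := fun h => (hpos v₀).ne' (by simpa using congrFun h v₀)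
  have hxx : 0 < x ⬝ᵥ x := aux_dot_self_pos hxne
  have hG_eq : x ⬝ᵥ ((distSignlessLaplacian G) *ᵥ x) = rhoQ G * (x ⬝ᵥ x) := by
    show x ⬝ᵥ ((distSignlessLaplacian G).mulVec x) = _
    rw [heig]
    simp [dotProduct_smul, smul_eq_mul]
  have hGt_le := aux_rhoQ_dot_ge Gt x
  have hfin : rhoQ G * (x ⬝ᵥ x) < rhoQ Gt * (x ⬝ᵥ x) := by
    calc rhoQ G * (x ⬝ᵥ x) = x ⬝ᵥ ((distSignlessLaplacian G) *ᵥ x) := hG_eq.symm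
      _ < x ⬝ᵥ ((distSignlessLaplacian Gt) *ᵥ x) := hQ_lt
      _ ≤ rhoQ Gt * (x ⬝ᵥ x) := hGt_le
  exact lt_of_mul_lt_mul_right hfin (le_of_lt hxx)
end
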